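/- arXiv:2602.20392 — 2 statements merged into one kernel-verified Lean document; each statement's English description precedes it below -/
import Mathlib

section
/- Let k₁, k₂ ≥ 1, k = k₁ + k₂, N = M^k, N₁ = M^{k₁}, N₂ = M^{k₂}. Then t_k = (1/N) Σ_{c,d ∈ C_{k₁}} Σ_{e,f ∈ C_{k₂}} exp(2πi(e−f)(c−d)/N)·|F_{N₁}(1_{C_{k₁}})(c−d)|²·|F_{N₂}(1_{C_{k₂}})(e−f)|², where c−d is taken in Z_{N₁} and e−f in Z_{N₂}, and in the exponential e−f and c−d are represented by integers. -/
open scoped BigOperators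

/-- The Cantor iterates `C_k = {Σ_{j<k} a_j M^j : a_j ∈ A} ⊆ {0,…,M^k-1}`. -/
def Ck (M : ℕ) (A : Finset ℕ) (k : ℕ) : Finset ℕ :=
  (Fintype.piFinset fun _ : Fin k => A).image fun a => ∑ j : Fin k, a j * M ^ (j : ℕ)

/-- The discrete Fourier transform of the indicator function of `S ⊆ Z_N`,
`F_N(1_S)(m) = N^{-1/2} Σ_{l<N} 1_S(l) exp(-2πi m l / N)`; it is `N`-periodic in `m`,
so a residue `m ∈ Z_N` may be fed in via any integer representative. -/
noncomputable def dftInd (N : ℕ) (S : Finset ℕ) (m : ℕ) : ℂ :=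
  ((1 : ℝ) / Real.sqrt N : ℝ) * ∑ l ∈ Finset.range N,
    (if l ∈ S then (1 : ℂ) else 0) * Complex.exp (-(2 * (Real.pi : ℂ) * Complex.I * m * l) / N)

/-- `t_k = (1/N) Σ_{j,ℓ ∈ Z_N} 1_{C_k}(j) 1_{C_k}(ℓ) |F_N(1_{C_k})(ℓ-j)|²`, `N = M^k`,
where `ℓ - j` is taken in `Z_N` (represented by `ℓ + N - j ≡ ℓ - j (mod N)`). -/
noncomputable def tk (M : ℕ) (A : Finset ℕ) (k : ℕ) : ℝ :=
  ((1 : ℝ) / ((M ^ k : ℕ) : ℝ)) * ∑ j ∈ Finset.range (M ^ k), ∑ l ∈ Finset.range (M ^ k),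
    (if j ∈ Ck M A k then (1 : ℝ) else 0) * (if l ∈ Ck M A k then (1 : ℝ) else 0) *
      ‖dftInd (M ^ k) (Ck M A k) (l + M ^ k - j)‖ ^ 2

/-- The additive energy of `X ⊆ Z_N`. -/
def addE (N : ℕ) (X : Finset ℕ) : ℕ :=
  (((X ×ˢ X) ×ˢ (X ×ˢ X)).filter fun p => (p.1.1 + p.1.2) % N = (p.2.1 + p.2.2) % N).card






/-- basic exponential -/
noncomputable def eN (N : ℕ) (x : ℤ) : ℂ :=
  Complex.exp (2 * (Real.pi : ℂ) * Complex.I * (x : ℂ) / (N : ℂ))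

lemma eN_add (N : ℕ) (x y : ℤ) : eN N (x + y) = eN N x * eN N y := by
  rw [eN, eN, eN, ← Complex.exp_add]
  congr 1
  push_cast
  ring

lemma eN_period (N : ℕ) (hN : N ≠ 0) (x t : ℤ) : eN N (x + N * t) = eN N x := by
  have hNc : (N : ℂ) ≠ 0 := Nat.cast_ne_zero.mpr hN
  rw [eN, eN]
  have h : 2 * (Real.pi : ℂ) * Complex.I * ((x + N * t : ℤ) : ℂ) / (N : ℂ)
      = 2 * (Real.pi : ℂ) * Complex.I * (x : ℂ) / (N : ℂ) + (t : ℂ) * (2 * (Real.pi : ℂ) * Complex.I) := by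
    push_cast
    field_simp
  rw [h, Complex.exp_add, Complex.exp_int_mul_two_pi_mul_I, mul_one]

lemma conj_eN (N : ℕ) (x : ℤ) : (starRingEnd ℂ) (eN N x) = eN N (-x) := by
  rw [eN, eN, ← Complex.exp_conj]
  congr 1
  simp only [map_div₀, map_mul, Complex.conj_I, Complex.conj_ofReal, map_ofNat,
    map_intCast, map_natCast]
  push_cast
  ring

lemma mem_Ck {M : ℕ} {A : Finset ℕ} {k x : ℕ} :
    x ∈ Ck M A k ↔ ∃ a : Fin k → ℕ, (∀ j, a j ∈ A) ∧ ∑ j : Fin k, a j * M ^ (j : ℕ) = x := by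
  simp [Ck, Fintype.mem_piFinset]

lemma Ck_lt {M : ℕ} {A : Finset ℕ} (hA : A ⊆ Finset.range M) :
    ∀ k, ∀ x ∈ Ck M A k, x < M ^ k := by
  intro k
  induction k with
  | zero =>
    intro x hx
    rw [mem_Ck] at hx
    obtain ⟨a, -, h⟩ := hx
    simp at h
    subst h
    simp
  | succ n ih =>
    intro x hx
    rw [mem_Ck] at hx
    obtain ⟨a, ha, rfl⟩ := hx
    rw [Fin.sum_univ_succ]
    have h0 : a 0 < M := Finset.mem_range.mp (hA (ha 0))
    have htail : (∑ j : Fin n, a j.succ * M ^ (j : ℕ)) < M ^ n := by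
      apply ih
      exact mem_Ck.mpr ⟨fun j => a j.succ, fun j => ha _, rfl⟩
    have hs : (∑ j : Fin n, a j.succ * M ^ ((j.succ : Fin (n+1)) : ℕ))
        = (∑ j : Fin n, a j.succ * M ^ (j : ℕ)) * M := by
      rw [Finset.sum_mul]
      apply Finset.sum_congr rfl
      intro j _
      have : ((j.succ : Fin (n+1)) : ℕ) = (j : ℕ) + 1 := rfl
      rw [this, pow_succ]
      ring
    rw [hs]
    have hM0 : 0 < M := by omega
    calc a 0 * M ^ ((0 : Fin (n+1)) : ℕ) + (∑ j : Fin n, a j.succ * M ^ (j : ℕ)) * M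
        = a 0 + (∑ j : Fin n, a j.succ * M ^ (j : ℕ)) * M := by norm_num
      _ < M + (∑ j : Fin n, a j.succ * M ^ (j : ℕ)) * M := by omega
      _ = ((∑ j : Fin n, a j.succ * M ^ (j : ℕ)) + 1) * M := by ring
      _ ≤ M ^ n * M := Nat.mul_le_mul_right M (by omega)
      _ = M ^ (n + 1) := (pow_succ M n).symm

lemma Ck_eq_image {M : ℕ} {A : Finset ℕ} (k₁ k₂ : ℕ) :
    Ck M A (k₁ + k₂) =
      ((Ck M A k₁) ×ˢ (Ck M A k₂)).image fun p => p.1 + M ^ k₁ * p.2 := by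
  ext x
  rw [mem_Ck, Finset.mem_image]
  constructor
  · rintro ⟨a, ha, rfl⟩
    refine ⟨(∑ j : Fin k₁, a (Fin.castAdd k₂ j) * M ^ (j : ℕ),
             ∑ j : Fin k₂, a (Fin.natAdd k₁ j) * M ^ (j : ℕ)), ?_, ?_⟩
    · exact Finset.mem_product.mpr
        ⟨mem_Ck.mpr ⟨fun j => a (Fin.castAdd k₂ j), fun j => ha _, rfl⟩,
         mem_Ck.mpr ⟨fun j => a (Fin.natAdd k₁ j), fun j => ha _, rfl⟩⟩
    · rw [Fin.sum_univ_add (f := fun j : Fin (k₁ + k₂) => a j * M ^ (j : ℕ))]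
      congr 1
      rw [Finset.mul_sum]
      apply Finset.sum_congr rfl
      intro j _
      have : ((Fin.natAdd k₁ j : Fin (k₁ + k₂)) : ℕ) = k₁ + (j : ℕ) := rfl
      rw [this, pow_add]
      ring
  · rintro ⟨⟨c, e⟩, hp, rfl⟩
    obtain ⟨hc, he⟩ := Finset.mem_product.mp hp
    obtain ⟨b, hb, hbc'⟩ := mem_Ck.mp hc
    obtain ⟨g, hg, hge'⟩ := mem_Ck.mp he
    have hbc : ∑ j : Fin k₁, b j * M ^ (j : ℕ) = c := hbc'
    have hge : ∑ j : Fin k₂, g j * M ^ (j : ℕ) = e := hge'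
    refine ⟨Fin.addCases (motive := fun _ => ℕ) b g, ?_, ?_⟩
    · intro j
      refine Fin.addCases (motive := fun j => Fin.addCases (motive := fun _ => ℕ) b g j ∈ A)
        (fun i => ?_) (fun i => ?_) j
      · simpa using hb i
      · simpa using hg i
    · rw [Fin.sum_univ_add (f := fun j : Fin (k₁ + k₂) =>
        Fin.addCases (motive := fun _ => ℕ) b g j * M ^ (j : ℕ))]
      simp only [Fin.addCases_left, Fin.addCases_right]
      rw [← hbc, ← hge]
      congr 1
      rw [Finset.mul_sum]
      apply Finset.sum_congr rfl
      intro j _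
      have : ((Fin.natAdd k₁ j : Fin (k₁ + k₂)) : ℕ) = k₁ + (j : ℕ) := rfl
      rw [this, pow_add]
      ring

lemma sum_Ck_split {M : ℕ} (hM : 0 < M) {A : Finset ℕ} (hA : A ⊆ Finset.range M)
    (k₁ k₂ : ℕ) (g : ℕ → ℂ) :
    ∑ x ∈ Ck M A (k₁ + k₂), g x
      = ∑ c ∈ Ck M A k₁, ∑ e ∈ Ck M A k₂, g (c + M ^ k₁ * e) := by
  rw [Ck_eq_image k₁ k₂, Finset.sum_image, Finset.sum_product]
  intro p hp q hq h
  obtain ⟨hp1, hp2⟩ := Finset.mem_product.mp hp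
  obtain ⟨hq1, hq2⟩ := Finset.mem_product.mp hq
  have hp1' : p.1 < M ^ k₁ := Ck_lt hA k₁ _ hp1
  have hq1' : q.1 < M ^ k₁ := Ck_lt hA k₁ _ hq1
  have h1 : p.1 = q.1 := by
    have := congrArg (· % M ^ k₁) h
    simpa [Nat.add_mul_mod_self_left, Nat.mod_eq_of_lt hp1', Nat.mod_eq_of_lt hq1'] using this
  have h2 : p.2 = q.2 := by
    simp only at h
    rw [h1] at h
    have := Nat.add_left_cancel h
    exact Nat.eq_of_mul_eq_mul_left (pow_pos hM k₁) this
  exact Prod.ext h1 h2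


lemma sum_indC (n : ℕ) (S : Finset ℕ) (hS : ∀ s ∈ S, s < n) (g : ℕ → ℂ) :
    ∑ l ∈ Finset.range n, (if l ∈ S then (1 : ℂ) else 0) * g l = ∑ l ∈ S, g l := by
  simp only [ite_mul, one_mul, zero_mul]
  rw [Finset.sum_ite_mem]
  congr 1
  exact Finset.inter_eq_right.mpr fun s hs => Finset.mem_range.mpr (hS s hs)

lemma sum_indR (n : ℕ) (S : Finset ℕ) (hS : ∀ s ∈ S, s < n) (g : ℕ → ℝ) :
    ∑ l ∈ Finset.range n, (if l ∈ S then (1 : ℝ) else 0) * g l = ∑ l ∈ S, g l := by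
  simp only [ite_mul, one_mul, zero_mul]
  rw [Finset.sum_ite_mem]
  congr 1
  exact Finset.inter_eq_right.mpr fun s hs => Finset.mem_range.mpr (hS s hs)

lemma dftInd_eq (n : ℕ) (S : Finset ℕ) (hS : ∀ s ∈ S, s < n) (m : ℕ) :
    dftInd n S m = (((1 : ℝ) / Real.sqrt n : ℝ) : ℂ) * ∑ l ∈ S, eN n (-((m : ℤ) * l)) := by
  rw [dftInd, sum_indC n S hS]
  congr 1
  apply Finset.sum_congr rfl
  intro l _
  rw [eN]
  congr 1
  push_cast
  ring

lemma key_norm (n : ℕ) (hn : n ≠ 0) (S : Finset ℕ) (hS : ∀ s ∈ S, s < n)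
    (a b : ℕ) (hb : b < n) :
    ((‖dftInd n S (a + n - b)‖ ^ 2 : ℝ) : ℂ)
      = (1 / (n : ℂ)) * ∑ x ∈ S, ∑ y ∈ S, eN n (((a : ℤ) - b) * ((x : ℤ) - y)) := by
  set m := a + n - b with hm
  have h1 : ((‖dftInd n S m‖ ^ 2 : ℝ) : ℂ)
      = (starRingEnd ℂ) (dftInd n S m) * dftInd n S m := by
    rw [← Complex.normSq_eq_norm_sq, mul_comm, Complex.mul_conj]
  rw [h1, dftInd_eq n S hS m]
  have hr : (starRingEnd ℂ) (((1 : ℝ) / Real.sqrt n : ℝ) : ℂ) = (((1 : ℝ) / Real.sqrt n : ℝ) : ℂ) :=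
    Complex.conj_ofReal _
  rw [map_mul, hr, map_sum]
  simp only [conj_eN, neg_neg]
  rw [mul_mul_mul_comm, Finset.sum_mul_sum]
  have hconst : (((1 : ℝ) / Real.sqrt n : ℝ) : ℂ) * (((1 : ℝ) / Real.sqrt n : ℝ) : ℂ)
      = 1 / (n : ℂ) := by
    rw [← Complex.ofReal_mul]
    rw [show (1 : ℝ) / Real.sqrt n * ((1 : ℝ) / Real.sqrt n) = 1 / n by
      rw [div_mul_div_comm, one_mul, Real.mul_self_sqrt (Nat.cast_nonneg n)]]
    push_cast
    ring
  rw [hconst]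
  congr 1
  apply Finset.sum_congr rfl
  intro x _
  apply Finset.sum_congr rfl
  intro y _
  rw [← eN_add]
  have hmz : ((m : ℕ) : ℤ) = (a : ℤ) - b + n := by omega
  have : ((m : ℤ) * x + -((m : ℤ) * y)) = (((a : ℤ) - b) * ((x : ℤ) - y)) + (n : ℤ) * ((x : ℤ) - y) := by
    rw [hmz]; ring
  rw [this, eN_period n hn]

/-- `Gg N base T w = Σ_{x,y∈T} eN N (base·w·(x-y))`. -/
noncomputable def Gg (N base : ℕ) (T : Finset ℕ) (w : ℤ) : ℂ :=
  ∑ x ∈ T, ∑ y ∈ T, eN N ((base : ℤ) * (w * ((x : ℤ) - y)))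

lemma sum_pair_swap (t : Finset ℕ) (K : ℕ → ℕ → ℕ → ℕ → ℂ) :
    (∑ a ∈ t, ∑ b ∈ t, ∑ c ∈ t, ∑ d ∈ t, K a b c d)
      = ∑ a ∈ t, ∑ b ∈ t, ∑ c ∈ t, ∑ d ∈ t, K c d a b := by
  calc (∑ a ∈ t, ∑ b ∈ t, ∑ c ∈ t, ∑ d ∈ t, K a b c d)
      = ∑ a ∈ t, ∑ b ∈ t, ∑ q ∈ t ×ˢ t, K a b q.1 q.2 := by
        refine Finset.sum_congr rfl fun a _ => Finset.sum_congr rfl fun b _ => ?_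
        exact (Finset.sum_product' t t (fun x y => K a b x y)).symm
    _ = ∑ p ∈ t ×ˢ t, ∑ q ∈ t ×ˢ t, K p.1 p.2 q.1 q.2 :=
        (Finset.sum_product' t t (fun x y => ∑ q ∈ t ×ˢ t, K x y q.1 q.2)).symm
    _ = ∑ q ∈ t ×ˢ t, ∑ p ∈ t ×ˢ t, K p.1 p.2 q.1 q.2 := Finset.sum_comm
    _ = ∑ a ∈ t, ∑ b ∈ t, ∑ p ∈ t ×ˢ t, K p.1 p.2 a b :=
        Finset.sum_product' t t (fun x y => ∑ p ∈ t ×ˢ t, K p.1 p.2 x y)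
    _ = ∑ a ∈ t, ∑ b ∈ t, ∑ c ∈ t, ∑ d ∈ t, K c d a b := by
        refine Finset.sum_congr rfl fun a _ => Finset.sum_congr rfl fun b _ => ?_
        exact Finset.sum_product' t t (fun x y => K x y a b)

lemma sum4_perm (s t : Finset ℕ) (W : ℕ → ℕ → ℕ → ℕ → ℂ) :
    (∑ d ∈ s, ∑ f ∈ t, ∑ c ∈ s, ∑ e ∈ t, W c d e f)
      = ∑ c ∈ s, ∑ d ∈ s, ∑ e ∈ t, ∑ f ∈ t, W c d e f := by
  calc (∑ d ∈ s, ∑ f ∈ t, ∑ c ∈ s, ∑ e ∈ t, W c d e f)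
      = ∑ d ∈ s, ∑ c ∈ s, ∑ f ∈ t, ∑ e ∈ t, W c d e f := by
        exact Finset.sum_congr rfl fun d _ => Finset.sum_comm
    _ = ∑ c ∈ s, ∑ d ∈ s, ∑ f ∈ t, ∑ e ∈ t, W c d e f := Finset.sum_comm
    _ = ∑ c ∈ s, ∑ d ∈ s, ∑ e ∈ t, ∑ f ∈ t, W c d e f := by
        exact Finset.sum_congr rfl fun c _ => Finset.sum_congr rfl fun d _ => Finset.sum_comm





lemma eN_base (n₁ n₂ : ℕ) (h₁ : n₁ ≠ 0) (h₂ : n₂ ≠ 0) (z : ℤ) :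
    eN n₁ z = eN (n₁ * n₂) ((n₂ : ℤ) * z) := by
  rw [eN, eN]
  congr 1
  have c₁ : (n₁ : ℂ) ≠ 0 := Nat.cast_ne_zero.mpr h₁
  have c₂ : (n₂ : ℂ) ≠ 0 := Nat.cast_ne_zero.mpr h₂
  push_cast
  field_simp

lemma tk_collapse {M : ℕ} {A : Finset ℕ} (hA : A ⊆ Finset.range M) (k : ℕ) :
    tk M A k = ((1 : ℝ) / ((M ^ k : ℕ) : ℝ)) * ∑ j ∈ Ck M A k, ∑ l ∈ Ck M A k,
      ‖dftInd (M ^ k) (Ck M A k) (l + M ^ k - j)‖ ^ 2 := by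
  rw [tk]
  congr 1
  have hb := Ck_lt hA k
  calc ∑ j ∈ Finset.range (M ^ k), ∑ l ∈ Finset.range (M ^ k),
        (if j ∈ Ck M A k then (1 : ℝ) else 0) * (if l ∈ Ck M A k then (1 : ℝ) else 0) *
          ‖dftInd (M ^ k) (Ck M A k) (l + M ^ k - j)‖ ^ 2
      = ∑ j ∈ Finset.range (M ^ k), (if j ∈ Ck M A k then (1 : ℝ) else 0) *
          ∑ l ∈ Ck M A k, ‖dftInd (M ^ k) (Ck M A k) (l + M ^ k - j)‖ ^ 2 := by
        refine Finset.sum_congr rfl fun j _ => ?_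
        calc ∑ l ∈ Finset.range (M ^ k),
              (if j ∈ Ck M A k then (1 : ℝ) else 0) * (if l ∈ Ck M A k then (1 : ℝ) else 0) *
                ‖dftInd (M ^ k) (Ck M A k) (l + M ^ k - j)‖ ^ 2
            = ∑ l ∈ Finset.range (M ^ k), (if j ∈ Ck M A k then (1 : ℝ) else 0) *
                ((if l ∈ Ck M A k then (1 : ℝ) else 0) *
                  ‖dftInd (M ^ k) (Ck M A k) (l + M ^ k - j)‖ ^ 2) :=
              Finset.sum_congr rfl fun l _ => mul_assoc _ _ _
          _ = (if j ∈ Ck M A k then (1 : ℝ) else 0) *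
              ∑ l ∈ Finset.range (M ^ k), (if l ∈ Ck M A k then (1 : ℝ) else 0) *
                ‖dftInd (M ^ k) (Ck M A k) (l + M ^ k - j)‖ ^ 2 :=
              (Finset.mul_sum _ _ _).symm
          _ = (if j ∈ Ck M A k then (1 : ℝ) else 0) *
              ∑ l ∈ Ck M A k, ‖dftInd (M ^ k) (Ck M A k) (l + M ^ k - j)‖ ^ 2 := by
              rw [sum_indR _ _ hb]
    _ = ∑ j ∈ Ck M A k, ∑ l ∈ Ck M A k,
          ‖dftInd (M ^ k) (Ck M A k) (l + M ^ k - j)‖ ^ 2 := sum_indR _ _ hb _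


set_option maxHeartbeats 12000000 in
/-- For `k = k₁ + k₂`, `N = M^k`, `N₁ = M^{k₁}`, `N₂ = M^{k₂}`:
`t_k = (1/N) Σ_{c,d ∈ C_{k₁}} Σ_{e,f ∈ C_{k₂}} exp(2πi(e-f)(c-d)/N)
· |F_{N₁}(1_{C_{k₁}})(c-d)|² · |F_{N₂}(1_{C_{k₂}})(e-f)|²`,
where in the exponential `e - f`, `c - d` are integer differences of the representatives,
and in the Fourier factors `c - d` is taken in `Z_{N₁}` (via the representative
`c + N₁ - d`) and `e - f` in `Z_{N₂}` (via `e + N₂ - f`). -/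
theorem stmt4 (M : ℕ) (hM : 2 ≤ M) (A : Finset ℕ) (hA : A ⊆ Finset.range M)
    (k₁ k₂ : ℕ) (hk₁ : 1 ≤ k₁) (hk₂ : 1 ≤ k₂) :
    (tk M A (k₁ + k₂) : ℂ) =
      ((1 : ℂ) / ((M ^ (k₁ + k₂) : ℕ) : ℂ)) *
        ∑ c ∈ Ck M A k₁, ∑ d ∈ Ck M A k₁, ∑ e ∈ Ck M A k₂, ∑ f ∈ Ck M A k₂,
          Complex.exp (2 * (Real.pi : ℂ) * Complex.I * ((e : ℂ) - (f : ℂ)) *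
              ((c : ℂ) - (d : ℂ)) / ((M ^ (k₁ + k₂) : ℕ) : ℂ)) *
            ((‖dftInd (M ^ k₁) (Ck M A k₁) (c + M ^ k₁ - d)‖ ^ 2 : ℝ) : ℂ) *
            ((‖dftInd (M ^ k₂) (Ck M A k₂) (e + M ^ k₂ - f)‖ ^ 2 : ℝ) : ℂ) := by
  have hM0 : 0 < M := by omega
  rw [tk_collapse hA (k₁ + k₂)]
  simp only [Complex.ofReal_mul, Complex.ofReal_sum, Complex.ofReal_div, Complex.ofReal_one,
    Complex.ofReal_natCast, Complex.ofReal_pow]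
  set N₁ := M ^ k₁ with hN₁def
  set N₂ := M ^ k₂ with hN₂def
  set N := M ^ (k₁ + k₂) with hNdef
  set C₁ := Ck M A k₁ with hC₁def
  set C₂ := Ck M A k₂ with hC₂def
  set C := Ck M A (k₁ + k₂) with hCdef
  have hN₁p : 0 < N₁ := pow_pos hM0 k₁
  have hN₂p : 0 < N₂ := pow_pos hM0 k₂
  have hNp : 0 < N := pow_pos hM0 (k₁ + k₂)
  have hN₁0 : N₁ ≠ 0 := by omega
  have hN₂0 : N₂ ≠ 0 := by omega
  have hN0 : N ≠ 0 := by omega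
  have hN : N = N₁ * N₂ := by rw [hNdef, hN₁def, hN₂def, pow_add]
  have hNc : (N : ℤ) = (N₁ : ℤ) * (N₂ : ℤ) := by rw [hN]; push_cast; ring
  have hC₁b : ∀ x ∈ C₁, x < N₁ := Ck_lt hA k₁
  have hC₂b : ∀ x ∈ C₂, x < N₂ := Ck_lt hA k₂
  have hCb : ∀ x ∈ C, x < N := Ck_lt hA (k₁ + k₂)
  have hsplit₁ : ∀ g : ℕ → ℂ, ∑ x ∈ C, g x = ∑ c ∈ C₁, ∑ e ∈ C₂, g (c + N₁ * e) :=
    fun g => sum_Ck_split hM0 hA k₁ k₂ g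
  have hsplit₂ : ∀ g : ℕ → ℂ, ∑ x ∈ C, g x = ∑ e ∈ C₂, ∑ c ∈ C₁, g (e + N₂ * c) := by
    intro g
    have h := sum_Ck_split hM0 hA k₂ k₁ g
    rw [Nat.add_comm k₂ k₁] at h
    exact h
  -- the common middle expression
  set Mid : ℂ := (1 / (N : ℂ)) * ∑ c ∈ C₁, ∑ d ∈ C₁,
      ((1 / (N : ℂ)) * (Gg N N₂ C₁ ((c : ℤ) - (d : ℤ)) *
        ∑ e ∈ C₂, ∑ f ∈ C₂,
          eN N (((e : ℤ) - (f : ℤ)) * ((c : ℤ) - (d : ℤ))) * Gg N N₁ C₂ ((e : ℤ) - (f : ℤ)))) with hMid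
  -- RHS equals Mid
  have hR : ((1 : ℂ) / (N : ℂ)) *
        (∑ c ∈ C₁, ∑ d ∈ C₁, ∑ e ∈ C₂, ∑ f ∈ C₂,
          Complex.exp (2 * (Real.pi : ℂ) * Complex.I * ((e : ℂ) - (f : ℂ)) *
              ((c : ℂ) - (d : ℂ)) / (N : ℂ)) *
            ((‖dftInd N₁ C₁ (c + N₁ - d)‖ : ℝ) : ℂ) ^ 2 *
            ((‖dftInd N₂ C₂ (e + N₂ - f)‖ : ℝ) : ℂ) ^ 2) = Mid := by
    rw [hMid]
    refine congrArg (fun z => (1 / (N : ℂ)) * z) ?_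
    refine Finset.sum_congr rfl fun c _ => ?_
    refine Finset.sum_congr rfl fun d hd => ?_
    have hF1 : ((‖dftInd N₁ C₁ (c + N₁ - d)‖ : ℝ) : ℂ) ^ 2
        = (1 / (N₁ : ℂ)) * Gg N N₂ C₁ ((c : ℤ) - (d : ℤ)) := by
      rw [← Complex.ofReal_pow, key_norm N₁ hN₁0 C₁ hC₁b c d (hC₁b d hd)]
      refine congrArg (fun z => (1 / (N₁ : ℂ)) * z) ?_
      simp only [Gg]
      refine Finset.sum_congr rfl fun x _ => Finset.sum_congr rfl fun y _ => ?_
      rw [eN_base N₁ N₂ hN₁0 hN₂0, ← hN]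
    have hNN : (1 / (N₁ : ℂ)) * (1 / (N₂ : ℂ)) = 1 / (N : ℂ) := by
      rw [hN]
      push_cast
      rw [div_mul_div_comm, one_mul]
    have hstep : ∀ e ∈ C₂, ∀ f ∈ C₂,
        Complex.exp (2 * (Real.pi : ℂ) * Complex.I * ((e : ℂ) - (f : ℂ)) *
              ((c : ℂ) - (d : ℂ)) / (N : ℂ)) *
            ((‖dftInd N₁ C₁ (c + N₁ - d)‖ : ℝ) : ℂ) ^ 2 *
            ((‖dftInd N₂ C₂ (e + N₂ - f)‖ : ℝ) : ℂ) ^ 2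
          = ((1 / (N : ℂ)) * Gg N N₂ C₁ ((c : ℤ) - (d : ℤ))) *
            (eN N (((e : ℤ) - (f : ℤ)) * ((c : ℤ) - (d : ℤ))) * Gg N N₁ C₂ ((e : ℤ) - (f : ℤ))) := by
      intro e _ f hf
      have hF2 : ((‖dftInd N₂ C₂ (e + N₂ - f)‖ : ℝ) : ℂ) ^ 2
          = (1 / (N₂ : ℂ)) * Gg N N₁ C₂ ((e : ℤ) - (f : ℤ)) := by
        rw [← Complex.ofReal_pow, key_norm N₂ hN₂0 C₂ hC₂b e f (hC₂b f hf)]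
        refine congrArg (fun z => (1 / (N₂ : ℂ)) * z) ?_
        simp only [Gg]
        refine Finset.sum_congr rfl fun x _ => Finset.sum_congr rfl fun y _ => ?_
        rw [eN_base N₂ N₁ hN₂0 hN₁0, ← show N = N₂ * N₁ by rw [hN]; ring]
      have hexp : Complex.exp (2 * (Real.pi : ℂ) * Complex.I * ((e : ℂ) - (f : ℂ)) *
              ((c : ℂ) - (d : ℂ)) / (N : ℂ))
          = eN N (((e : ℤ) - (f : ℤ)) * ((c : ℤ) - (d : ℤ))) := by
        rw [eN]
        congr 1
        push_cast
        ring
      rw [hF1, hF2, hexp]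
      calc eN N (((e : ℤ) - f) * ((c : ℤ) - d)) *
            ((1 / (N₁ : ℂ)) * Gg N N₂ C₁ ((c : ℤ) - d)) *
            ((1 / (N₂ : ℂ)) * Gg N N₁ C₂ ((e : ℤ) - f))
          = ((1 / (N₁ : ℂ)) * (1 / (N₂ : ℂ))) * Gg N N₂ C₁ ((c : ℤ) - d) *
            (eN N (((e : ℤ) - f) * ((c : ℤ) - d)) * Gg N N₁ C₂ ((e : ℤ) - f)) := by ring
        _ = _ := by rw [hNN]
    calc ∑ e ∈ C₂, ∑ f ∈ C₂,
          Complex.exp (2 * (Real.pi : ℂ) * Complex.I * ((e : ℂ) - (f : ℂ)) *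
              ((c : ℂ) - (d : ℂ)) / (N : ℂ)) *
            ((‖dftInd N₁ C₁ (c + N₁ - d)‖ : ℝ) : ℂ) ^ 2 *
            ((‖dftInd N₂ C₂ (e + N₂ - f)‖ : ℝ) : ℂ) ^ 2
        = ∑ e ∈ C₂, ∑ f ∈ C₂, ((1 / (N : ℂ)) * Gg N N₂ C₁ ((c : ℤ) - (d : ℤ))) *
            (eN N (((e : ℤ) - (f : ℤ)) * ((c : ℤ) - (d : ℤ))) * Gg N N₁ C₂ ((e : ℤ) - (f : ℤ))) :=
          Finset.sum_congr rfl fun e he => Finset.sum_congr rfl fun f hf => hstep e he f hf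
      _ = ((1 / (N : ℂ)) * Gg N N₂ C₁ ((c : ℤ) - (d : ℤ))) *
            ∑ e ∈ C₂, ∑ f ∈ C₂,
              eN N (((e : ℤ) - (f : ℤ)) * ((c : ℤ) - (d : ℤ))) * Gg N N₁ C₂ ((e : ℤ) - (f : ℤ)) := by
          simp only [← Finset.mul_sum]
      _ = _ := by ring
  rw [hR]
  calc (1 / (N : ℂ)) * ∑ j ∈ C, ∑ l ∈ C, ((‖dftInd N C (l + N - j)‖ : ℝ) : ℂ) ^ 2
      = (1 / (N : ℂ)) * ∑ j ∈ C, ∑ l ∈ C, ((1 / (N : ℂ)) *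
          ∑ x ∈ C, ∑ y ∈ C, eN N (((l : ℤ) - (j : ℤ)) * ((x : ℤ) - (y : ℤ)))) := by
        refine congrArg (fun z => (1 / (N : ℂ)) * z) ?_
        refine Finset.sum_congr rfl fun j hj => Finset.sum_congr rfl fun l _ => ?_
        rw [← Complex.ofReal_pow, key_norm N hN0 C hCb l j (hCb j hj)]
    _ = (1 / (N : ℂ)) * ∑ d ∈ C₁, ∑ f ∈ C₂, ∑ l ∈ C, ((1 / (N : ℂ)) *
          ∑ x ∈ C, ∑ y ∈ C, eN N (((l : ℤ) - ((d + N₁ * f : ℕ) : ℤ)) * ((x : ℤ) - (y : ℤ)))) := by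
        exact congrArg (fun z => (1 / (N : ℂ)) * z) (hsplit₁ _)
    _ = (1 / (N : ℂ)) * ∑ d ∈ C₁, ∑ f ∈ C₂, ∑ c ∈ C₁, ∑ e ∈ C₂, ((1 / (N : ℂ)) *
          ∑ x ∈ C, ∑ y ∈ C, eN N ((((c + N₁ * e : ℕ) : ℤ) - ((d + N₁ * f : ℕ) : ℤ)) *
            ((x : ℤ) - (y : ℤ)))) := by
        refine congrArg (fun z => (1 / (N : ℂ)) * z) ?_
        refine Finset.sum_congr rfl fun d _ => Finset.sum_congr rfl fun f _ => ?_
        exact hsplit₁ _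
    _ = (1 / (N : ℂ)) * ∑ d ∈ C₁, ∑ f ∈ C₂, ∑ c ∈ C₁, ∑ e ∈ C₂, ((1 / (N : ℂ)) *
          ∑ e' ∈ C₂, ∑ c' ∈ C₁, ∑ y ∈ C, eN N ((((c + N₁ * e : ℕ) : ℤ) - ((d + N₁ * f : ℕ) : ℤ)) *
            (((e' + N₂ * c' : ℕ) : ℤ) - (y : ℤ)))) := by
        refine congrArg (fun z => (1 / (N : ℂ)) * z) ?_
        refine Finset.sum_congr rfl fun d _ => Finset.sum_congr rfl fun f _ =>
          Finset.sum_congr rfl fun c _ => Finset.sum_congr rfl fun e _ => ?_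
        exact congrArg (fun z => (1 / (N : ℂ)) * z) (hsplit₂ _)
    _ = (1 / (N : ℂ)) * ∑ d ∈ C₁, ∑ f ∈ C₂, ∑ c ∈ C₁, ∑ e ∈ C₂, ((1 / (N : ℂ)) *
          ∑ e' ∈ C₂, ∑ c' ∈ C₁, ∑ f' ∈ C₂, ∑ d' ∈ C₁,
            eN N ((((c + N₁ * e : ℕ) : ℤ) - ((d + N₁ * f : ℕ) : ℤ)) *
              (((e' + N₂ * c' : ℕ) : ℤ) - ((f' + N₂ * d' : ℕ) : ℤ)))) := by
        refine congrArg (fun z => (1 / (N : ℂ)) * z) ?_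
        refine Finset.sum_congr rfl fun d _ => Finset.sum_congr rfl fun f _ =>
          Finset.sum_congr rfl fun c _ => Finset.sum_congr rfl fun e _ => ?_
        refine congrArg (fun z => (1 / (N : ℂ)) * z) ?_
        refine Finset.sum_congr rfl fun e' _ => Finset.sum_congr rfl fun c' _ => ?_
        exact hsplit₂ _
    _ = (1 / (N : ℂ)) * ∑ d ∈ C₁, ∑ f ∈ C₂, ∑ c ∈ C₁, ∑ e ∈ C₂, ((1 / (N : ℂ)) *
          ((∑ e' ∈ C₂, ∑ f' ∈ C₂,
            eN N ((((c : ℤ) - (d : ℤ)) + (N₁ : ℤ) * ((e : ℤ) - (f : ℤ))) * ((e' : ℤ) - (f' : ℤ)))) *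
            Gg N N₂ C₁ ((c : ℤ) - (d : ℤ)))) := by
        refine congrArg (fun z => (1 / (N : ℂ)) * z) ?_
        refine Finset.sum_congr rfl fun d _ => Finset.sum_congr rfl fun f _ =>
          Finset.sum_congr rfl fun c _ => Finset.sum_congr rfl fun e _ => ?_
        refine congrArg (fun z => (1 / (N : ℂ)) * z) ?_
        calc ∑ e' ∈ C₂, ∑ c' ∈ C₁, ∑ f' ∈ C₂, ∑ d' ∈ C₁,
              eN N ((((c + N₁ * e : ℕ) : ℤ) - ((d + N₁ * f : ℕ) : ℤ)) *
                (((e' + N₂ * c' : ℕ) : ℤ) - ((f' + N₂ * d' : ℕ) : ℤ)))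
            = ∑ e' ∈ C₂, ∑ f' ∈ C₂, ∑ c' ∈ C₁, ∑ d' ∈ C₁,
              eN N ((((c + N₁ * e : ℕ) : ℤ) - ((d + N₁ * f : ℕ) : ℤ)) *
                (((e' + N₂ * c' : ℕ) : ℤ) - ((f' + N₂ * d' : ℕ) : ℤ))) :=
              Finset.sum_congr rfl fun e' _ => Finset.sum_comm
          _ = ∑ e' ∈ C₂, ∑ f' ∈ C₂,
                (eN N ((((c : ℤ) - (d : ℤ)) + (N₁ : ℤ) * ((e : ℤ) - (f : ℤ))) * ((e' : ℤ) - (f' : ℤ))) *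
                  Gg N N₂ C₁ ((c : ℤ) - (d : ℤ))) := by
              refine Finset.sum_congr rfl fun e' _ => Finset.sum_congr rfl fun f' _ => ?_
              simp only [Gg]
              rw [Finset.mul_sum]
              refine Finset.sum_congr rfl fun c' _ => ?_
              rw [Finset.mul_sum]
              refine Finset.sum_congr rfl fun d' _ => ?_
              rw [← eN_add]
              have harg : (((c + N₁ * e : ℕ) : ℤ) - ((d + N₁ * f : ℕ) : ℤ)) *
                    (((e' + N₂ * c' : ℕ) : ℤ) - ((f' + N₂ * d' : ℕ) : ℤ))
                  = ((((c : ℤ) - (d : ℤ)) + (N₁ : ℤ) * ((e : ℤ) - (f : ℤ))) * ((e' : ℤ) - (f' : ℤ)) +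
                      (N₂ : ℤ) * (((c : ℤ) - (d : ℤ)) * ((c' : ℤ) - (d' : ℤ)))) +
                    (N : ℤ) * (((e : ℤ) - (f : ℤ)) * ((c' : ℤ) - (d' : ℤ))) := by
                rw [hNc]
                push_cast
                ring
              rw [harg]
              exact eN_period N hN0 _ _
          _ = (∑ e' ∈ C₂, ∑ f' ∈ C₂,
                eN N ((((c : ℤ) - (d : ℤ)) + (N₁ : ℤ) * ((e : ℤ) - (f : ℤ))) * ((e' : ℤ) - (f' : ℤ)))) *
                Gg N N₂ C₁ ((c : ℤ) - (d : ℤ)) := by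
              rw [Finset.sum_mul]
              exact Finset.sum_congr rfl fun e' _ => (Finset.sum_mul _ _ _).symm
    _ = (1 / (N : ℂ)) * ∑ c ∈ C₁, ∑ d ∈ C₁, ∑ e ∈ C₂, ∑ f ∈ C₂, ((1 / (N : ℂ)) *
          ((∑ e' ∈ C₂, ∑ f' ∈ C₂,
            eN N ((((c : ℤ) - (d : ℤ)) + (N₁ : ℤ) * ((e : ℤ) - (f : ℤ))) * ((e' : ℤ) - (f' : ℤ)))) *
            Gg N N₂ C₁ ((c : ℤ) - (d : ℤ)))) := by
        refine congrArg (fun z => (1 / (N : ℂ)) * z) ?_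
        exact sum4_perm C₁ C₂ fun c d e f => (1 / (N : ℂ)) *
          ((∑ e' ∈ C₂, ∑ f' ∈ C₂,
            eN N ((((c : ℤ) - (d : ℤ)) + (N₁ : ℤ) * ((e : ℤ) - (f : ℤ))) * ((e' : ℤ) - (f' : ℤ)))) *
            Gg N N₂ C₁ ((c : ℤ) - (d : ℤ)))
    _ = Mid := by
        rw [hMid]
        refine congrArg (fun z => (1 / (N : ℂ)) * z) ?_
        refine Finset.sum_congr rfl fun c _ => Finset.sum_congr rfl fun d _ => ?_
        calc ∑ e ∈ C₂, ∑ f ∈ C₂, ((1 / (N : ℂ)) *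
              ((∑ e' ∈ C₂, ∑ f' ∈ C₂,
                eN N ((((c : ℤ) - (d : ℤ)) + (N₁ : ℤ) * ((e : ℤ) - (f : ℤ))) * ((e' : ℤ) - (f' : ℤ)))) *
                Gg N N₂ C₁ ((c : ℤ) - (d : ℤ))))
            = ∑ e ∈ C₂, ∑ f ∈ C₂, (((1 / (N : ℂ)) * Gg N N₂ C₁ ((c : ℤ) - (d : ℤ))) *
                ∑ e' ∈ C₂, ∑ f' ∈ C₂,
                  eN N ((((c : ℤ) - (d : ℤ)) + (N₁ : ℤ) * ((e : ℤ) - (f : ℤ))) * ((e' : ℤ) - (f' : ℤ)))) :=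
              Finset.sum_congr rfl fun e _ => Finset.sum_congr rfl fun f _ => by ring
          _ = ((1 / (N : ℂ)) * Gg N N₂ C₁ ((c : ℤ) - (d : ℤ))) *
                ∑ e ∈ C₂, ∑ f ∈ C₂, ∑ e' ∈ C₂, ∑ f' ∈ C₂,
                  eN N ((((c : ℤ) - (d : ℤ)) + (N₁ : ℤ) * ((e : ℤ) - (f : ℤ))) * ((e' : ℤ) - (f' : ℤ))) := by
              simp only [← Finset.mul_sum]
          _ = ((1 / (N : ℂ)) * Gg N N₂ C₁ ((c : ℤ) - (d : ℤ))) *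
                ∑ e ∈ C₂, ∑ f ∈ C₂,
                  eN N (((e : ℤ) - (f : ℤ)) * ((c : ℤ) - (d : ℤ))) * Gg N N₁ C₂ ((e : ℤ) - (f : ℤ)) := by
              refine congrArg (fun z => ((1 / (N : ℂ)) * Gg N N₂ C₁ ((c : ℤ) - (d : ℤ))) * z) ?_
              calc ∑ e ∈ C₂, ∑ f ∈ C₂, ∑ e' ∈ C₂, ∑ f' ∈ C₂,
                    eN N ((((c : ℤ) - (d : ℤ)) + (N₁ : ℤ) * ((e : ℤ) - (f : ℤ))) * ((e' : ℤ) - (f' : ℤ)))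
                  = ∑ e ∈ C₂, ∑ f ∈ C₂, ∑ e' ∈ C₂, ∑ f' ∈ C₂,
                    eN N ((((c : ℤ) - (d : ℤ)) + (N₁ : ℤ) * ((e' : ℤ) - (f' : ℤ))) * ((e : ℤ) - (f : ℤ))) :=
                    sum_pair_swap C₂ fun a b a' b' =>
                      eN N ((((c : ℤ) - (d : ℤ)) + (N₁ : ℤ) * ((a : ℤ) - (b : ℤ))) * ((a' : ℤ) - (b' : ℤ)))
                _ = ∑ e ∈ C₂, ∑ f ∈ C₂,
                      eN N (((e : ℤ) - (f : ℤ)) * ((c : ℤ) - (d : ℤ))) * Gg N N₁ C₂ ((e : ℤ) - (f : ℤ)) := by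
                    refine Finset.sum_congr rfl fun e _ => Finset.sum_congr rfl fun f _ => ?_
                    simp only [Gg]
                    rw [Finset.mul_sum]
                    refine Finset.sum_congr rfl fun e' _ => ?_
                    rw [Finset.mul_sum]
                    refine Finset.sum_congr rfl fun f' _ => ?_
                    rw [← eN_add]
                    exact congrArg (eN N) (by ring)
          _ = (1 / (N : ℂ)) * (Gg N N₂ C₁ ((c : ℤ) - (d : ℤ)) *
                ∑ e ∈ C₂, ∑ f ∈ C₂,
                  eN N (((e : ℤ) - (f : ℤ)) * ((c : ℤ) - (d : ℤ))) * Gg N N₁ C₂ ((e : ℤ) - (f : ℤ))) := by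
              ring
end

section
/- Suppose 2 ≤ |A| ≤ M−1, so that δ := log|A|/log M ∈ (0,1). Then there exists β > 1/2 − δ such that for every ε > 0 there is a constant C_ε > 0 with t_k ≤ C_ε·(M^k)^{−4β+ε} for all k ≥ 1. -/
open scoped BigOperators

open Finset Complex

noncomputable def ph (N : ℕ) (z : ℤ) : ℂ :=
  Complex.exp (2 * (Real.pi : ℂ) * Complex.I * z / N)

noncomputable def Wf (N : ℕ) (C : Finset ℕ) (d : ℤ) : ℂ := ∑ x ∈ C, ph N (d * x)

noncomputable def Ur (N : ℕ) (C : Finset ℕ) : ℝ :=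
  ∑ j ∈ C, ∑ l ∈ C, ‖Wf N C ((j : ℤ) - l)‖ ^ 2

lemma ph_add (N : ℕ) (z w : ℤ) : ph N (z + w) = ph N z * ph N w := by
  rw [ph, ph, ph, ← Complex.exp_add]
  congr 1
  push_cast
  ring

lemma ph_conj (N : ℕ) (z : ℤ) : (starRingEnd ℂ) (ph N z) = ph N (-z) := by
  rw [ph, ph, ← Complex.exp_conj]
  congr 1
  rw [map_div₀]
  push_cast
  simp [map_mul, Complex.conj_I, Complex.conj_ofReal, map_ofNat]

lemma ph_norm (N : ℕ) (z : ℤ) : ‖ph N z‖ = 1 := by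
  have : ph N z = Complex.exp ((2 * Real.pi * z / N : ℝ) * Complex.I) := by
    rw [ph]; congr 1; push_cast; ring
  rw [this]
  exact Complex.norm_exp_ofReal_mul_I _

lemma ph_scale (N₁ N₂ : ℕ) (h₁ : N₁ ≠ 0) (h₂ : N₂ ≠ 0) (z : ℤ) :
    ph (N₁ * N₂) ((N₂ : ℤ) * z) = ph N₁ z := by
  rw [ph, ph]
  congr 1
  have h₁' : (N₁ : ℂ) ≠ 0 := Nat.cast_ne_zero.2 h₁
  have h₂' : (N₂ : ℂ) ≠ 0 := Nat.cast_ne_zero.2 h₂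
  push_cast
  field_simp

lemma ph_self (N : ℕ) (h : N ≠ 0) (z : ℤ) : ph N ((N : ℤ) * z) = 1 := by
  have hN : (N : ℂ) ≠ 0 := Nat.cast_ne_zero.2 h
  rw [ph]
  have : 2 * (Real.pi : ℂ) * Complex.I * (((N : ℤ) * z : ℤ) : ℂ) / N = (z : ℂ) * (2 * Real.pi * Complex.I) := by
    push_cast; field_simp
  rw [this]
  exact Complex.exp_int_mul_two_pi_mul_I z

lemma W_mul_conj (N : ℕ) (C : Finset ℕ) (d : ℤ) :
    Wf N C d * (starRingEnd ℂ) (Wf N C d) = ((‖Wf N C d‖ ^ 2 : ℝ) : ℂ) := by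
  rw [Complex.mul_conj]
  norm_cast
  rw [← Complex.sq_norm]

lemma digitsum_inj {M k : ℕ} {a b : Fin k → ℕ} (ha : ∀ i, a i < M) (hb : ∀ i, b i < M)
    (h : ∑ j : Fin k, a j * M ^ (j : ℕ) = ∑ j : Fin k, b j * M ^ (j : ℕ)) : a = b := by
  induction k with
  | zero => funext i; exact i.elim0
  | succ n ih =>
    have hM : 0 < M := Nat.pos_of_ne_zero fun hM0 => by simpa [hM0] using ha 0
    rw [Fin.sum_univ_succ, Fin.sum_univ_succ] at h
    have hre : ∀ c : Fin (n+1) → ℕ, (∑ j : Fin n, c j.succ * M ^ ((j.succ : Fin (n+1)) : ℕ))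
        = (∑ j : Fin n, c j.succ * M ^ (j : ℕ)) * M := by
      intro c
      rw [Finset.sum_mul]
      refine Finset.sum_congr rfl fun j _ => ?_
      have : ((j.succ : Fin (n+1)) : ℕ) = (j : ℕ) + 1 := rfl
      rw [this, pow_succ]; ring
    rw [hre a, hre b] at h
    simp only [Fin.val_zero, pow_zero, mul_one] at h
    have h0 : a 0 = b 0 := by
      have := congrArg (· % M) h
      simpa [Nat.add_mul_mod_self_right, Nat.mod_eq_of_lt (ha 0), Nat.mod_eq_of_lt (hb 0)] using this
    have htail : (∑ j : Fin n, a j.succ * M ^ (j : ℕ)) = ∑ j : Fin n, b j.succ * M ^ (j : ℕ) := by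
      have h' : (∑ j : Fin n, a j.succ * M ^ (j : ℕ)) * M
          = (∑ j : Fin n, b j.succ * M ^ (j : ℕ)) * M := by omega
      exact Nat.eq_of_mul_eq_mul_right hM h'
    have : (fun j : Fin n => a j.succ) = fun j : Fin n => b j.succ :=
      ih (fun i => ha i.succ) (fun i => hb i.succ) htail
    funext i
    refine Fin.cases h0 (fun j => ?_) i
    exact congrFun this j

lemma mem_piFinset_lt {M : ℕ} {A : Finset ℕ} (hA : A ⊆ Finset.range M) {k : ℕ}
    {a : Fin k → ℕ} (h : a ∈ Fintype.piFinset fun _ : Fin k => A) : ∀ i, a i < M := by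
  intro i
  have := Fintype.mem_piFinset.1 h i
  simpa using hA this

lemma sum_Ck_eq {M : ℕ} {A : Finset ℕ} (hA : A ⊆ Finset.range M) (k : ℕ) {β : Type*}
    [AddCommMonoid β] (f : ℕ → β) :
    ∑ x ∈ Ck M A k, f x
      = ∑ a ∈ Fintype.piFinset fun _ : Fin k => A, f (∑ j : Fin k, a j * M ^ (j : ℕ)) := by
  rw [Ck, Finset.sum_image]
  intro a ha b hb h
  exact digitsum_inj (mem_piFinset_lt hA ha) (mem_piFinset_lt hA hb) h

lemma card_Ck {M : ℕ} {A : Finset ℕ} (hA : A ⊆ Finset.range M) (k : ℕ) :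
    (Ck M A k).card = A.card ^ k := by
  rw [Ck, Finset.card_image_of_injOn, Fintype.card_piFinset]
  · simp
  · intro a ha b hb h
    exact digitsum_inj (mem_piFinset_lt hA (by simpa using ha)) (mem_piFinset_lt hA (by simpa using hb)) h

lemma Ck_subset_range {M : ℕ} {A : Finset ℕ} (hA : A ⊆ Finset.range M) (k : ℕ) :
    Ck M A k ⊆ Finset.range (M ^ k) := by
  intro x hx
  rw [Ck, Finset.mem_image] at hx
  obtain ⟨a, ha, rfl⟩ := hx
  rw [Finset.mem_range]
  have hlt := mem_piFinset_lt hA ha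
  clear ha
  induction k with
  | zero => simpa using Nat.zero_lt_one
  | succ n ih =>
    rw [Fin.sum_univ_succ]
    have hre : (∑ j : Fin n, a j.succ * M ^ ((j.succ : Fin (n+1)) : ℕ))
        = (∑ j : Fin n, a j.succ * M ^ (j : ℕ)) * M := by
      rw [Finset.sum_mul]
      refine Finset.sum_congr rfl fun j _ => ?_
      have : ((j.succ : Fin (n+1)) : ℕ) = (j : ℕ) + 1 := rfl
      rw [this, pow_succ]; ring
    rw [hre]
    have h1 : (∑ j : Fin n, a j.succ * M ^ (j : ℕ)) < M ^ n := ih _ (fun i => hlt i.succ)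
    have h2 : a 0 < M := hlt 0
    have : (∑ j : Fin n, a j.succ * M ^ (j : ℕ)) * M ≤ (M ^ n - 1) * M := by
      exact Nat.mul_le_mul_right M (by omega)
    have hMn : 1 ≤ M ^ n := Nat.one_le_pow _ _ (by omega)
    calc a 0 * M ^ (0:ℕ) + (∑ j : Fin n, a j.succ * M ^ (j : ℕ)) * M
        ≤ (M - 1) + (M ^ n - 1) * M := by simpa using Nat.add_le_add (by omega) this
      _ < M ^ (n+1) := by
          have : (M ^ n - 1) * M = M ^ n * M - M := by
            rw [Nat.sub_mul, one_mul]
          rw [this, pow_succ]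
          have : M ≤ M ^ n * M := Nat.le_mul_of_pos_left M (by omega)
          omega

lemma sum_Ck_add {M : ℕ} {A : Finset ℕ} (hA : A ⊆ Finset.range M) (p q : ℕ) {β : Type*}
    [AddCommMonoid β] (f : ℕ → β) :
    ∑ x ∈ Ck M A (p + q), f x
      = ∑ c ∈ Ck M A p, ∑ d ∈ Ck M A q, f (c + M ^ p * d) := by
  have hR : (∑ c ∈ Ck M A p, ∑ d ∈ Ck M A q, f (c + M ^ p * d))
      = ∑ b ∈ Fintype.piFinset (fun _ : Fin p => A), ∑ e ∈ Fintype.piFinset (fun _ : Fin q => A),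
          f ((∑ j : Fin p, b j * M ^ (j : ℕ)) + M ^ p * ∑ j : Fin q, e j * M ^ (j : ℕ)) := by
    rw [sum_Ck_eq hA]
    exact Finset.sum_congr rfl fun b _ => sum_Ck_eq hA q _
  rw [sum_Ck_eq hA, hR, ← Finset.sum_product']
  refine Finset.sum_nbij' (fun a => (fun i => a (Fin.castAdd q i), fun i => a (Fin.natAdd p i)))
    (fun bc => Fin.addCases bc.1 bc.2) ?_ ?_ ?_ ?_ ?_
  · intro a ha
    rw [Finset.mem_product]
    constructor <;> · rw [Fintype.mem_piFinset]; intro i; exact Fintype.mem_piFinset.1 ha _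
  · intro bc hbc
    rw [Finset.mem_product] at hbc
    rw [Fintype.mem_piFinset]
    intro i
    refine Fin.addCases (fun j => ?_) (fun j => ?_) i
    · simpa [Fin.addCases_left] using Fintype.mem_piFinset.1 hbc.1 j
    · simpa [Fin.addCases_right] using Fintype.mem_piFinset.1 hbc.2 j
  · intro a ha
    funext i
    refine Fin.addCases (fun j => ?_) (fun j => ?_) i
    · simp [Fin.addCases_left]
    · simp [Fin.addCases_right]
  · intro bc hbc
    refine Prod.ext ?_ ?_ <;> · funext i; simp [Fin.addCases_left, Fin.addCases_right]
  · intro a ha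
    congr 1
    rw [Fin.sum_univ_add]
    congr 1
    rw [Finset.mul_sum]
    refine Finset.sum_congr rfl fun j _ => ?_
    have : ((Fin.natAdd p j : Fin (p + q)) : ℕ) = p + (j : ℕ) := rfl
    rw [this, pow_add]; ring

lemma mem_Ck_two {M : ℕ} {A : Finset ℕ} {a a' : ℕ} (ha : a ∈ A) (ha' : a' ∈ A) :
    a + M * a' ∈ Ck M A 2 := by
  rw [Ck, Finset.mem_image]
  refine ⟨![a, a'], ?_, ?_⟩
  · rw [Fintype.mem_piFinset]
    intro i
    fin_cases i <;> simpa
  · rw [Fin.sum_univ_two]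
    simp [Matrix.cons_val_zero, Matrix.cons_val_one]
    ring

lemma sum_ind_collapse {N : ℕ} {C : Finset ℕ} (hC : C ⊆ Finset.range N) (f : ℕ → ℂ) :
    (∑ x ∈ Finset.range N, (if x ∈ C then (1:ℂ) else 0) * f x) = ∑ x ∈ C, f x := by
  calc (∑ x ∈ Finset.range N, (if x ∈ C then (1:ℂ) else 0) * f x)
      = ∑ x ∈ Finset.range N, (if x ∈ C then f x else 0) :=
        Finset.sum_congr rfl fun x _ => by split_ifs <;> ring
    _ = ∑ x ∈ Finset.range N ∩ C, f x := Finset.sum_ite_mem _ _ _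
    _ = ∑ x ∈ C, f x := by rw [Finset.inter_eq_right.2 hC]

lemma dft_eq {N : ℕ} (hN : N ≠ 0) {C : Finset ℕ} (hC : C ⊆ Finset.range N)
    {j : ℕ} (hj : j < N) (l : ℕ) :
    dftInd N C (l + N - j) = ((1 / Real.sqrt N : ℝ) : ℂ) * Wf N C ((j : ℤ) - l) := by
  rw [dftInd, Wf]
  congr 1
  rw [sum_ind_collapse hC]
  refine Finset.sum_congr rfl fun x _ => ?_
  have hNc : (N : ℂ) ≠ 0 := Nat.cast_ne_zero.2 hN
  have hcast : ((l + N - j : ℕ) : ℂ) = (l : ℂ) + N - j := by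
    have : j ≤ l + N := le_trans hj.le (Nat.le_add_left N l)
    push_cast [this]
    ring
  have harg : -(2 * (Real.pi : ℂ) * Complex.I * ((l + N - j : ℕ) : ℂ) * x) / N
      = 2 * (Real.pi : ℂ) * Complex.I * ((((j : ℤ) - l) * x : ℤ) : ℂ) / N
        + ((-(x : ℤ) : ℤ) : ℂ) * (2 * Real.pi * Complex.I) := by
    rw [hcast]
    push_cast
    field_simp
    ring
  rw [harg, Complex.exp_add, ph, Complex.exp_int_mul_two_pi_mul_I, mul_one]

lemma Wf_norm_le (N : ℕ) (C : Finset ℕ) (d : ℤ) : ‖Wf N C d‖ ≤ (C.card : ℝ) := by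
  rw [Wf]
  calc ‖∑ x ∈ C, ph N (d * x)‖ ≤ ∑ x ∈ C, ‖ph N (d * x)‖ := norm_sum_le _ _
    _ = ∑ _x ∈ C, (1:ℝ) := Finset.sum_congr rfl fun x _ => ph_norm N (d * x)
    _ = (C.card : ℝ) := by simp

lemma Ur_nonneg (N : ℕ) (C : Finset ℕ) : 0 ≤ Ur N C :=
  Finset.sum_nonneg fun _ _ => Finset.sum_nonneg fun _ _ => by positivity

lemma Ur_le (N : ℕ) (C : Finset ℕ) : Ur N C ≤ (C.card : ℝ) ^ 4 := by
  rw [Ur]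
  have h : ∀ j ∈ C, ∀ l ∈ C, ‖Wf N C ((j:ℤ) - l)‖ ^ 2 ≤ (C.card:ℝ)^2 := fun j _ l _ =>
    pow_le_pow_left₀ (norm_nonneg _) (Wf_norm_le N C _) 2
  calc (∑ j ∈ C, ∑ l ∈ C, ‖Wf N C ((j : ℤ) - l)‖ ^ 2)
      ≤ ∑ j ∈ C, ∑ l ∈ C, (C.card:ℝ)^2 :=
        Finset.sum_le_sum fun j hj => Finset.sum_le_sum (h j hj)
    _ = (C.card:ℝ)^4 := by
        simp [Finset.sum_const, nsmul_eq_mul]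
        ring

lemma tk_eq {M : ℕ} (hM : 2 ≤ M) {A : Finset ℕ} (hA : A ⊆ Finset.range M) (k : ℕ) :
    tk M A k = Ur (M ^ k) (Ck M A k) / ((M : ℝ) ^ k) ^ 2 := by
  have hN : M ^ k ≠ 0 := pow_ne_zero _ (by omega)
  have hNR : (0:ℝ) < (M:ℝ)^k := by positivity
  have hsub := Ck_subset_range hA k
  rw [tk]
  have h1 : ∀ j ∈ Finset.range (M ^ k),
      (∑ l ∈ Finset.range (M ^ k), (if j ∈ Ck M A k then (1:ℝ) else 0) *
        (if l ∈ Ck M A k then (1:ℝ) else 0) *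
          ‖dftInd (M ^ k) (Ck M A k) (l + M ^ k - j)‖ ^ 2)
      = if j ∈ Ck M A k then
          (∑ l ∈ Ck M A k, ‖dftInd (M ^ k) (Ck M A k) (l + M ^ k - j)‖ ^ 2) else 0 := by
    intro j _
    split_ifs with hj
    · calc _ = ∑ l ∈ Finset.range (M ^ k),
            (if l ∈ Ck M A k then ‖dftInd (M ^ k) (Ck M A k) (l + M ^ k - j)‖ ^ 2 else 0) :=
            Finset.sum_congr rfl fun l _ => by split_ifs <;> simp
        _ = ∑ l ∈ Finset.range (M ^ k) ∩ Ck M A k, _ := Finset.sum_ite_mem _ _ _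
        _ = _ := by rw [Finset.inter_eq_right.2 hsub]
    · simp
  rw [Finset.sum_congr rfl h1, Finset.sum_ite_mem, Finset.inter_eq_right.2 hsub]
  have h2 : ∀ j ∈ Ck M A k, (∑ l ∈ Ck M A k, ‖dftInd (M ^ k) (Ck M A k) (l + M ^ k - j)‖ ^ 2)
      = ∑ l ∈ Ck M A k, (1 / (M:ℝ)^k) * ‖Wf (M ^ k) (Ck M A k) ((j:ℤ) - l)‖ ^ 2 := by
    intro j hj
    refine Finset.sum_congr rfl fun l _ => ?_
    rw [dft_eq hN hsub (Finset.mem_range.1 (hsub hj)) l]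
    rw [norm_mul, Complex.norm_real, Real.norm_eq_abs,
      _root_.abs_of_nonneg (by positivity : (0:ℝ) ≤ 1 / Real.sqrt ((M^k : ℕ) : ℝ)), mul_pow,
      div_pow, one_pow, Real.sq_sqrt (by positivity : (0:ℝ) ≤ ((M^k : ℕ) : ℝ))]
    push_cast
    ring
  rw [Finset.sum_congr rfl h2, Ur]
  simp only [← Finset.mul_sum]
  push_cast
  rw [eq_div_iff (by positivity : ((M:ℝ)^k)^2 ≠ 0)]
  ring_nf
  rw [← mul_pow, mul_inv_cancel₀ (by positivity : (M:ℝ) ≠ 0), one_pow, one_mul]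

lemma sum_Ck_add' {M : ℕ} {A : Finset ℕ} (hA : A ⊆ Finset.range M) (p q : ℕ) {β : Type*}
    [AddCommMonoid β] (f : ℕ → β) :
    ∑ x ∈ Ck M A (p + q), f x = ∑ c ∈ Ck M A q, ∑ d ∈ Ck M A p, f (c + M ^ q * d) := by
  rw [show p + q = q + p from Nat.add_comm p q]
  exact sum_Ck_add hA q p f

lemma ph_scale' (N₁ N₂ : ℕ) (h₁ : N₁ ≠ 0) (h₂ : N₂ ≠ 0) (z : ℤ) :
    ph (N₁ * N₂) ((N₁ : ℤ) * z) = ph N₂ z := by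
  rw [mul_comm N₁ N₂]; exact ph_scale N₂ N₁ h₂ h₁ z

/-- pairing sum into a norm square -/
lemma sum_pair_normsq (v : Finset ℕ) (g : ℕ → ℂ) :
    (∑ b ∈ v, ∑ b' ∈ v, g b * (starRingEnd ℂ) (g b')) = ((‖∑ b ∈ v, g b‖ ^ 2 : ℝ) : ℂ) := by
  rw [← Finset.sum_mul_sum, ← map_sum]
  rw [Complex.mul_conj]; norm_cast; rw [← Complex.sq_norm]

/-- swap two blocks of paired sums -/
lemma swap_pairs {β : Type*} [AddCommMonoid β] (v w : Finset ℕ) (X : ℕ → ℕ → ℕ → ℕ → β) :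
    (∑ b ∈ v, ∑ b' ∈ v, ∑ s ∈ w, ∑ s' ∈ w, X b b' s s')
      = ∑ s ∈ w, ∑ s' ∈ w, ∑ b ∈ v, ∑ b' ∈ v, X b b' s s' := by
  calc (∑ b ∈ v, ∑ b' ∈ v, ∑ s ∈ w, ∑ s' ∈ w, X b b' s s')
      = ∑ p ∈ v ×ˢ v, ∑ s ∈ w, ∑ s' ∈ w, X p.1 p.2 s s' :=
        (Finset.sum_product' v v (fun b b' => ∑ s ∈ w, ∑ s' ∈ w, X b b' s s')).symm
    _ = ∑ p ∈ v ×ˢ v, ∑ q ∈ w ×ˢ w, X p.1 p.2 q.1 q.2 :=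
        Finset.sum_congr rfl fun p _ =>
          (Finset.sum_product' w w (fun s s' => X p.1 p.2 s s')).symm
    _ = ∑ q ∈ w ×ˢ w, ∑ p ∈ v ×ˢ v, X p.1 p.2 q.1 q.2 := Finset.sum_comm
    _ = ∑ q ∈ w ×ˢ w, ∑ b ∈ v, ∑ b' ∈ v, X b b' q.1 q.2 :=
        Finset.sum_congr rfl fun q _ =>
          Finset.sum_product' v v (fun b b' => X b b' q.1 q.2)
    _ = ∑ s ∈ w, ∑ s' ∈ w, ∑ b ∈ v, ∑ b' ∈ v, X b b' s s' :=
        Finset.sum_product' w w (fun s s' => ∑ b ∈ v, ∑ b' ∈ v, X b b' s s')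

/-- expansion of a norm-square of `Wf` into a double sum of phases -/
lemma normsq_expand (N : ℕ) (C : Finset ℕ) (d : ℤ) :
    ((‖Wf N C d‖ ^ 2 : ℝ) : ℂ) = ∑ x ∈ C, ∑ y ∈ C, ph N (d * x + -(d * y)) := by
  rw [Wf, ← sum_pair_normsq C (fun x => ph N (d * x))]
  refine Finset.sum_congr rfl fun x _ => Finset.sum_congr rfl fun y _ => ?_
  rw [ph_conj, ← ph_add]

lemma Ur_complex (N : ℕ) (C : Finset ℕ) :
    ((Ur N C : ℝ) : ℂ)
      = ∑ j ∈ C, ∑ l ∈ C, ∑ x ∈ C, ∑ y ∈ C, ph N (((j:ℤ) - l) * x + -(((j:ℤ) - l) * y)) := by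
  rw [Ur, Complex.ofReal_sum]
  refine Finset.sum_congr rfl fun j _ => ?_
  rw [Complex.ofReal_sum]
  exact Finset.sum_congr rfl fun l _ => normsq_expand N C _

/-- factor four independent sums -/
lemma sum_four_factor (w1 w2 : Finset ℕ) (g p : ℕ → ℂ) :
    (∑ s ∈ w2, ∑ t ∈ w1, ∑ s' ∈ w2, ∑ t' ∈ w1,
        (g s * p t) * ((starRingEnd ℂ) (g s') * (starRingEnd ℂ) (p t')))
      = ((‖∑ s ∈ w2, g s‖ ^ 2 : ℝ) : ℂ) * ((‖∑ t ∈ w1, p t‖ ^ 2 : ℝ) : ℂ) := by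
  have h1 : ∀ s ∈ w2, (∑ t ∈ w1, ∑ s' ∈ w2, ∑ t' ∈ w1,
      (g s * p t) * ((starRingEnd ℂ) (g s') * (starRingEnd ℂ) (p t')))
      = ∑ s' ∈ w2, ∑ t ∈ w1, ∑ t' ∈ w1,
      (g s * p t) * ((starRingEnd ℂ) (g s') * (starRingEnd ℂ) (p t')) := fun s _ =>
    Finset.sum_comm
  rw [Finset.sum_congr rfl h1]
  have h2 : ∀ s ∈ w2, ∀ s' ∈ w2, (∑ t ∈ w1, ∑ t' ∈ w1,
      (g s * p t) * ((starRingEnd ℂ) (g s') * (starRingEnd ℂ) (p t')))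
      = (g s * (starRingEnd ℂ) (g s')) * ∑ t ∈ w1, ∑ t' ∈ w1, p t * (starRingEnd ℂ) (p t') := by
    intro s _ s' _
    calc (∑ t ∈ w1, ∑ t' ∈ w1,
          (g s * p t) * ((starRingEnd ℂ) (g s') * (starRingEnd ℂ) (p t')))
        = ∑ t ∈ w1, ∑ t' ∈ w1,
            (g s * (starRingEnd ℂ) (g s')) * (p t * (starRingEnd ℂ) (p t')) :=
          Finset.sum_congr rfl fun t _ => Finset.sum_congr rfl fun t' _ => by ring
      _ = (g s * (starRingEnd ℂ) (g s')) * ∑ t ∈ w1, ∑ t' ∈ w1, p t * (starRingEnd ℂ) (p t') := by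
          rw [Finset.mul_sum]
          exact Finset.sum_congr rfl fun t _ => (Finset.mul_sum _ _ _).symm
  calc (∑ s ∈ w2, ∑ s' ∈ w2, ∑ t ∈ w1, ∑ t' ∈ w1,
        (g s * p t) * ((starRingEnd ℂ) (g s') * (starRingEnd ℂ) (p t')))
      = ∑ s ∈ w2, ∑ s' ∈ w2, (g s * (starRingEnd ℂ) (g s'))
          * ∑ t ∈ w1, ∑ t' ∈ w1, p t * (starRingEnd ℂ) (p t') :=
        Finset.sum_congr rfl fun s hs => Finset.sum_congr rfl fun s' hs' => h2 s hs s' hs'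
    _ = (∑ s ∈ w2, ∑ s' ∈ w2, g s * (starRingEnd ℂ) (g s'))
          * ∑ t ∈ w1, ∑ t' ∈ w1, p t * (starRingEnd ℂ) (p t') := by
        rw [Finset.sum_mul]
        exact Finset.sum_congr rfl fun s _ => (Finset.sum_mul _ _ _).symm
    _ = _ := by rw [sum_pair_normsq, sum_pair_normsq]

/-- The key phase splitting identity. -/
lemma phase_split {M : ℕ} (hM : 2 ≤ M) (k k' : ℕ) (a a' b b' s s' t t' : ℕ) :
    ph (M ^ (k + k')) ((((a:ℤ) + (M:ℤ)^k * b) - ((a':ℤ) + (M:ℤ)^k * b'))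
        * ((((s:ℤ) + (M:ℤ)^k' * t)) + -((((s':ℤ) + (M:ℤ)^k' * t')))))
      = ((ph (M ^ (k + k')) (((a:ℤ) - a') * s) * ph (M ^ k') (((b:ℤ) - b') * s))
          * ph (M ^ k) (((a:ℤ) - a') * t))
        * (((starRingEnd ℂ) (ph (M ^ (k + k')) (((a:ℤ) - a') * s')
              * ph (M ^ k') (((b:ℤ) - b') * s')))
          * (starRingEnd ℂ) (ph (M ^ k) (((a:ℤ) - a') * t'))) := by
  have hk : (M:ℕ)^k ≠ 0 := pow_ne_zero _ (by omega)
  have hk' : (M:ℕ)^k' ≠ 0 := pow_ne_zero _ (by omega)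
  have hsplit : ∀ z : ℤ, ph (M^k) z = ph (M^k * M^k') (((M^k' : ℕ) : ℤ) * z) := fun z => by
    rw [mul_comm (M^k) (M^k')]
    exact (ph_scale' _ _ hk' hk z).symm
  have hsplit' : ∀ z : ℤ, ph (M^k') z = ph (M^k * M^k') (((M^k : ℕ) : ℤ) * z) := fun z => by
    rw [mul_comm (M^k) (M^k')]
    exact (ph_scale _ _ hk' hk z).symm
  rw [show M^(k+k') = M^k * M^k' from pow_add M k k']
  set E : ℤ := ((a:ℤ) - a') * s + -(((a:ℤ) - a') * s')
      + ((M^k' : ℕ) : ℤ) * (((a:ℤ) - a') * t + -(((a:ℤ) - a') * t'))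
      + ((M^k : ℕ) : ℤ) * (((b:ℤ) - b') * s + -(((b:ℤ) - b') * s')) with hE
  trans ph (M^k * M^k') E
  · rw [show (((a:ℤ) + (M:ℤ)^k * b) - ((a':ℤ) + (M:ℤ)^k * b'))
        * ((((s:ℤ) + (M:ℤ)^k' * t)) + -((((s':ℤ) + (M:ℤ)^k' * t'))))
        = E + ((M^k * M^k' : ℕ) : ℤ) * (((b:ℤ) - b') * t + -(((b:ℤ) - b') * t')) by
      rw [hE]; push_cast; ring]
    rw [ph_add, ph_self _ (mul_ne_zero hk hk') _, mul_one]
  · symm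
    simp only [map_mul, ph_conj, hsplit, hsplit', ← ph_add]
    congr 1
    rw [hE]
    push_cast
    ring

/-- The crux Cauchy-type estimate. -/
lemma crux (N N2 : ℕ) (v w : Finset ℕ) (c : ℕ → ℂ) (hc : ∀ s : ℕ, ‖c s‖ = 1) :
    (∑ b ∈ v, ∑ b' ∈ v, ‖∑ s ∈ w, c s * ph N2 (((b:ℤ) - b') * s)‖ ^ 2)
      ≤ ∑ s ∈ w, ∑ s' ∈ w, ‖∑ b ∈ v, ph N2 (((s:ℤ) - s') * b)‖ ^ 2 := by
  have hpoint : ∀ b b' : ℕ, ((‖∑ s ∈ w, c s * ph N2 (((b:ℤ) - b') * s)‖ ^ 2 : ℝ) : ℂ)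
      = ∑ s ∈ w, ∑ s' ∈ w, (c s * (starRingEnd ℂ) (c s'))
          * ph N2 ((((b:ℤ) - b') * s) + -(((b:ℤ) - b') * s')) := by
    intro b b'
    rw [← sum_pair_normsq w (fun s => c s * ph N2 (((b:ℤ) - b') * s))]
    refine Finset.sum_congr rfl fun s _ => Finset.sum_congr rfl fun s' _ => ?_
    rw [map_mul, ph_conj, ph_add]
    ring
  have hinner : ∀ s s' : ℕ, (∑ b ∈ v, ∑ b' ∈ v, (c s * (starRingEnd ℂ) (c s'))
        * ph N2 ((((b:ℤ) - b') * s) + -(((b:ℤ) - b') * s')))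
      = (c s * (starRingEnd ℂ) (c s'))
          * ((‖∑ b ∈ v, ph N2 (((s:ℤ) - s') * b)‖ ^ 2 : ℝ) : ℂ) := by
    intro s s'
    rw [← sum_pair_normsq v (fun b => ph N2 (((s:ℤ) - s') * b))]
    rw [Finset.mul_sum]
    refine Finset.sum_congr rfl fun b _ => ?_
    rw [Finset.mul_sum]
    refine Finset.sum_congr rfl fun b' _ => ?_
    rw [ph_conj, ← ph_add]
    rw [show ((s:ℤ) - s') * b + -(((s:ℤ) - s') * b') = (((b:ℤ) - b') * s) + -(((b:ℤ) - b') * s')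
      from by ring]
  have hcast : ((∑ b ∈ v, ∑ b' ∈ v, ‖∑ s ∈ w, c s * ph N2 (((b:ℤ) - b') * s)‖ ^ 2 : ℝ) : ℂ)
      = ∑ s ∈ w, ∑ s' ∈ w, (c s * (starRingEnd ℂ) (c s'))
          * ((‖∑ b ∈ v, ph N2 (((s:ℤ) - s') * b)‖ ^ 2 : ℝ) : ℂ) := by
    rw [Complex.ofReal_sum]
    calc (∑ b ∈ v, ((∑ b' ∈ v, ‖∑ s ∈ w, c s * ph N2 (((b:ℤ) - b') * s)‖ ^ 2 : ℝ) : ℂ))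
        = ∑ b ∈ v, ∑ b' ∈ v, ((‖∑ s ∈ w, c s * ph N2 (((b:ℤ) - b') * s)‖ ^ 2 : ℝ) : ℂ) :=
          Finset.sum_congr rfl fun b _ => Complex.ofReal_sum _ _
      _ = ∑ b ∈ v, ∑ b' ∈ v, ∑ s ∈ w, ∑ s' ∈ w, (c s * (starRingEnd ℂ) (c s'))
            * ph N2 ((((b:ℤ) - b') * s) + -(((b:ℤ) - b') * s')) :=
          Finset.sum_congr rfl fun b _ => Finset.sum_congr rfl fun b' _ => hpoint b b'
      _ = ∑ s ∈ w, ∑ s' ∈ w, ∑ b ∈ v, ∑ b' ∈ v, (c s * (starRingEnd ℂ) (c s'))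
            * ph N2 ((((b:ℤ) - b') * s) + -(((b:ℤ) - b') * s')) :=
          swap_pairs v w _
      _ = _ := Finset.sum_congr rfl fun s _ => Finset.sum_congr rfl fun s' _ => hinner s s'
  have hnn : (0:ℝ) ≤ ∑ b ∈ v, ∑ b' ∈ v, ‖∑ s ∈ w, c s * ph N2 (((b:ℤ) - b') * s)‖ ^ 2 :=
    Finset.sum_nonneg fun _ _ => Finset.sum_nonneg fun _ _ => by positivity
  calc (∑ b ∈ v, ∑ b' ∈ v, ‖∑ s ∈ w, c s * ph N2 (((b:ℤ) - b') * s)‖ ^ 2)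
      = ‖((∑ b ∈ v, ∑ b' ∈ v, ‖∑ s ∈ w, c s * ph N2 (((b:ℤ) - b') * s)‖ ^ 2 : ℝ) : ℂ)‖ := by
        rw [Complex.norm_real, Real.norm_eq_abs, _root_.abs_of_nonneg hnn]
    _ = ‖∑ s ∈ w, ∑ s' ∈ w, (c s * (starRingEnd ℂ) (c s'))
          * ((‖∑ b ∈ v, ph N2 (((s:ℤ) - s') * b)‖ ^ 2 : ℝ) : ℂ)‖ := by rw [hcast]
    _ ≤ ∑ s ∈ w, ‖∑ s' ∈ w, (c s * (starRingEnd ℂ) (c s'))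
          * ((‖∑ b ∈ v, ph N2 (((s:ℤ) - s') * b)‖ ^ 2 : ℝ) : ℂ)‖ := norm_sum_le _ _
    _ ≤ ∑ s ∈ w, ∑ s' ∈ w, ‖(c s * (starRingEnd ℂ) (c s'))
          * ((‖∑ b ∈ v, ph N2 (((s:ℤ) - s') * b)‖ ^ 2 : ℝ) : ℂ)‖ :=
        Finset.sum_le_sum fun s _ => norm_sum_le _ _
    _ = ∑ s ∈ w, ∑ s' ∈ w, ‖∑ b ∈ v, ph N2 (((s:ℤ) - s') * b)‖ ^ 2 := by
        refine Finset.sum_congr rfl fun s _ => Finset.sum_congr rfl fun s' _ => ?_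
        rw [norm_mul, norm_mul, hc s, RCLike.norm_conj, hc s', Complex.norm_real,
          Real.norm_eq_abs, _root_.abs_of_nonneg (by positivity : (0:ℝ) ≤ ‖∑ b ∈ v, ph N2 (((s:ℤ) - s') * b)‖ ^ 2)]
        ring

lemma Ur_submul {M : ℕ} (hM : 2 ≤ M) {A : Finset ℕ} (hA : A ⊆ Finset.range M) (k k' : ℕ) :
    Ur (M ^ (k + k')) (Ck M A (k + k'))
      ≤ Ur (M ^ k) (Ck M A k) * Ur (M ^ k') (Ck M A k') := by
  set C := Ck M A (k + k') with hC
  set C1 := Ck M A k with hC1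
  set C2 := Ck M A k' with hC2
  -- pointwise phase factorization
  have hpt : ∀ a b a' b' s t s' t' : ℕ,
      ph (M ^ (k + k')) ((((a + M^k*b : ℕ) : ℤ) - ((a' + M^k*b' : ℕ) : ℤ)) * ((s + M^k'*t : ℕ) : ℤ)
        + -((((a + M^k*b : ℕ) : ℤ) - ((a' + M^k*b' : ℕ) : ℤ)) * ((s' + M^k'*t' : ℕ) : ℤ)))
      = ((ph (M^(k+k')) (((a:ℤ)-a')*s) * ph (M^k') (((b:ℤ)-b')*s)) * ph (M^k) (((a:ℤ)-a')*t))
        * ((starRingEnd ℂ) (ph (M^(k+k')) (((a:ℤ)-a')*s') * ph (M^k') (((b:ℤ)-b')*s'))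
          * (starRingEnd ℂ) (ph (M^k) (((a:ℤ)-a')*t'))) := by
    intro a b a' b' s t s' t'
    rw [show (((a + M^k*b : ℕ) : ℤ) - ((a' + M^k*b' : ℕ) : ℤ)) * ((s + M^k'*t : ℕ) : ℤ)
        + -((((a + M^k*b : ℕ) : ℤ) - ((a' + M^k*b' : ℕ) : ℤ)) * ((s' + M^k'*t' : ℕ) : ℤ))
        = (((a:ℤ) + (M:ℤ)^k * b) - ((a':ℤ) + (M:ℤ)^k * b'))
          * ((((s:ℤ) + (M:ℤ)^k' * t)) + -((((s':ℤ) + (M:ℤ)^k' * t')))) from by push_cast; ring]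
    exact phase_split hM k k' a a' b b' s s' t t'
  -- the inner four sums
  have hfour : ∀ a b a' b' : ℕ,
      (∑ s ∈ C2, ∑ t ∈ C1, ∑ s' ∈ C2, ∑ t' ∈ C1,
          ph (M ^ (k + k')) ((((a + M^k*b : ℕ) : ℤ) - ((a' + M^k*b' : ℕ) : ℤ)) * ((s + M^k'*t : ℕ) : ℤ)
            + -((((a + M^k*b : ℕ) : ℤ) - ((a' + M^k*b' : ℕ) : ℤ)) * ((s' + M^k'*t' : ℕ) : ℤ))))
      = ((‖∑ s ∈ C2, ph (M^(k+k')) (((a:ℤ)-a')*s) * ph (M^k') (((b:ℤ)-b')*s)‖ ^ 2 : ℝ) : ℂ)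
        * ((‖∑ t ∈ C1, ph (M^k) (((a:ℤ)-a')*t)‖ ^ 2 : ℝ) : ℂ) := by
    intro a b a' b'
    rw [← sum_four_factor C1 C2 (fun s => ph (M^(k+k')) (((a:ℤ)-a')*s) * ph (M^k') (((b:ℤ)-b')*s))
      (fun t => ph (M^k) (((a:ℤ)-a')*t))]
    exact Finset.sum_congr rfl fun s _ => Finset.sum_congr rfl fun t _ =>
      Finset.sum_congr rfl fun s' _ => Finset.sum_congr rfl fun t' _ => hpt a b a' b' s t s' t'
  -- complex identity
  have hIc : ((Ur (M ^ (k + k')) C : ℝ) : ℂ)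
      = ∑ a ∈ C1, ∑ b ∈ C2, ∑ a' ∈ C1, ∑ b' ∈ C2,
          (((‖∑ s ∈ C2, ph (M^(k+k')) (((a:ℤ)-a')*s) * ph (M^k') (((b:ℤ)-b')*s)‖ ^ 2 : ℝ) : ℂ)
            * ((‖∑ t ∈ C1, ph (M^k) (((a:ℤ)-a')*t)‖ ^ 2 : ℝ) : ℂ)) := by
    calc ((Ur (M ^ (k + k')) C : ℝ) : ℂ)
        = ∑ j ∈ C, ∑ l ∈ C, ∑ x ∈ C, ∑ y ∈ C,
            ph (M ^ (k + k')) (((j:ℤ) - l) * x + -(((j:ℤ) - l) * y)) := Ur_complex _ _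
      _ = ∑ a ∈ C1, ∑ b ∈ C2, ∑ l ∈ C, ∑ x ∈ C, ∑ y ∈ C,
            ph (M ^ (k + k')) ((((a + M^k*b : ℕ):ℤ) - l) * x + -((((a + M^k*b : ℕ):ℤ) - l) * y)) :=
          sum_Ck_add hA k k' (fun j => ∑ l ∈ C, ∑ x ∈ C, ∑ y ∈ C,
            ph (M ^ (k + k')) (((j:ℤ) - l) * x + -(((j:ℤ) - l) * y)))
      _ = ∑ a ∈ C1, ∑ b ∈ C2, ∑ a' ∈ C1, ∑ b' ∈ C2, ∑ x ∈ C, ∑ y ∈ C,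
            ph (M ^ (k + k')) ((((a + M^k*b : ℕ):ℤ) - ((a' + M^k*b' : ℕ):ℤ)) * x
              + -((((a + M^k*b : ℕ):ℤ) - ((a' + M^k*b' : ℕ):ℤ)) * y)) :=
          Finset.sum_congr rfl fun a _ => Finset.sum_congr rfl fun b _ =>
            sum_Ck_add hA k k' (fun l => ∑ x ∈ C, ∑ y ∈ C,
              ph (M ^ (k + k')) ((((a + M^k*b : ℕ):ℤ) - l) * x
                + -((((a + M^k*b : ℕ):ℤ) - l) * y)))
      _ = ∑ a ∈ C1, ∑ b ∈ C2, ∑ a' ∈ C1, ∑ b' ∈ C2, ∑ s ∈ C2, ∑ t ∈ C1, ∑ y ∈ C,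
            ph (M ^ (k + k')) ((((a + M^k*b : ℕ):ℤ) - ((a' + M^k*b' : ℕ):ℤ)) * ((s + M^k'*t : ℕ):ℤ)
              + -((((a + M^k*b : ℕ):ℤ) - ((a' + M^k*b' : ℕ):ℤ)) * y)) :=
          Finset.sum_congr rfl fun a _ => Finset.sum_congr rfl fun b _ =>
            Finset.sum_congr rfl fun a' _ => Finset.sum_congr rfl fun b' _ =>
              sum_Ck_add' hA k k' (fun x => ∑ y ∈ C,
                ph (M ^ (k + k')) ((((a + M^k*b : ℕ):ℤ) - ((a' + M^k*b' : ℕ):ℤ)) * x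
                  + -((((a + M^k*b : ℕ):ℤ) - ((a' + M^k*b' : ℕ):ℤ)) * y)))
      _ = ∑ a ∈ C1, ∑ b ∈ C2, ∑ a' ∈ C1, ∑ b' ∈ C2, ∑ s ∈ C2, ∑ t ∈ C1, ∑ s' ∈ C2, ∑ t' ∈ C1,
            ph (M ^ (k + k')) ((((a + M^k*b : ℕ):ℤ) - ((a' + M^k*b' : ℕ):ℤ)) * ((s + M^k'*t : ℕ):ℤ)
              + -((((a + M^k*b : ℕ):ℤ) - ((a' + M^k*b' : ℕ):ℤ)) * ((s' + M^k'*t' : ℕ):ℤ))) :=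
          Finset.sum_congr rfl fun a _ => Finset.sum_congr rfl fun b _ =>
            Finset.sum_congr rfl fun a' _ => Finset.sum_congr rfl fun b' _ =>
              Finset.sum_congr rfl fun s _ => Finset.sum_congr rfl fun t _ =>
                sum_Ck_add' hA k k' (fun y =>
                  ph (M ^ (k + k')) ((((a + M^k*b : ℕ):ℤ) - ((a' + M^k*b' : ℕ):ℤ)) * ((s + M^k'*t : ℕ):ℤ)
                    + -((((a + M^k*b : ℕ):ℤ) - ((a' + M^k*b' : ℕ):ℤ)) * y)))
      _ = _ :=
          Finset.sum_congr rfl fun a _ => Finset.sum_congr rfl fun b _ =>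
            Finset.sum_congr rfl fun a' _ => Finset.sum_congr rfl fun b' _ => hfour a b a' b'
  -- real identity
  have hIr : Ur (M ^ (k + k')) C
      = ∑ a ∈ C1, ∑ b ∈ C2, ∑ a' ∈ C1, ∑ b' ∈ C2,
          (‖∑ s ∈ C2, ph (M^(k+k')) (((a:ℤ)-a')*s) * ph (M^k') (((b:ℤ)-b')*s)‖ ^ 2
            * ‖∑ t ∈ C1, ph (M^k) (((a:ℤ)-a')*t)‖ ^ 2) := by
    exact_mod_cast hIc
  -- estimate
  calc Ur (M ^ (k + k')) C
      = ∑ a ∈ C1, ∑ a' ∈ C1, ∑ b ∈ C2, ∑ b' ∈ C2,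
          (‖∑ s ∈ C2, ph (M^(k+k')) (((a:ℤ)-a')*s) * ph (M^k') (((b:ℤ)-b')*s)‖ ^ 2
            * ‖∑ t ∈ C1, ph (M^k) (((a:ℤ)-a')*t)‖ ^ 2) :=
        hIr.trans (Finset.sum_congr rfl fun a _ => Finset.sum_comm)
    _ = ∑ a ∈ C1, ∑ a' ∈ C1, (‖∑ t ∈ C1, ph (M^k) (((a:ℤ)-a')*t)‖ ^ 2
          * ∑ b ∈ C2, ∑ b' ∈ C2,
              ‖∑ s ∈ C2, ph (M^(k+k')) (((a:ℤ)-a')*s) * ph (M^k') (((b:ℤ)-b')*s)‖ ^ 2) := by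
        refine Finset.sum_congr rfl fun a _ => Finset.sum_congr rfl fun a' _ => ?_
        rw [Finset.mul_sum]
        refine Finset.sum_congr rfl fun b _ => ?_
        rw [Finset.mul_sum]
        exact Finset.sum_congr rfl fun b' _ => by ring
    _ ≤ ∑ a ∈ C1, ∑ a' ∈ C1, (‖∑ t ∈ C1, ph (M^k) (((a:ℤ)-a')*t)‖ ^ 2 * Ur (M ^ k') C2) := by
        refine Finset.sum_le_sum fun a _ => Finset.sum_le_sum fun a' _ => ?_
        refine mul_le_mul_of_nonneg_left ?_ (by positivity)
        exact crux (M^(k+k')) (M^k') C2 C2 (fun s => ph (M^(k+k')) (((a:ℤ)-a')*s))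
          (fun s => ph_norm _ _)
    _ = (∑ a ∈ C1, ∑ a' ∈ C1, ‖∑ t ∈ C1, ph (M^k) (((a:ℤ)-a')*t)‖ ^ 2) * Ur (M ^ k') C2 := by
        rw [Finset.sum_mul]
        exact Finset.sum_congr rfl fun a _ => (Finset.sum_mul _ _ _).symm
    _ = Ur (M ^ k) C1 * Ur (M ^ k') C2 := rfl

lemma ph_eq_one {N : ℕ} (hN : N ≠ 0) {e : ℤ} (h : ph N e = 1) : (N : ℤ) ∣ e := by
  rw [ph, Complex.exp_eq_one_iff] at h
  obtain ⟨n, hn⟩ := h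
  have hNc : (N : ℂ) ≠ 0 := Nat.cast_ne_zero.2 hN
  have hπ : (Real.pi : ℂ) ≠ 0 := by
    simpa using Complex.ofReal_ne_zero.2 Real.pi_ne_zero
  have h2πI : (2 * (Real.pi : ℂ) * Complex.I) ≠ 0 := by
    simp [hπ, Complex.I_ne_zero]
  have he : (e : ℂ) = (n : ℂ) * N := by
    rw [div_eq_iff hNc] at hn
    have h3 : (2 * (Real.pi : ℂ) * Complex.I) * (e : ℂ)
        = (2 * (Real.pi : ℂ) * Complex.I) * ((n : ℂ) * N) := by linear_combination hn
    exact mul_left_cancel₀ h2πI h3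
  have : e = n * N := by exact_mod_cast he
  exact ⟨n, by linarith⟩

lemma norm_add_lt_two {z w : ℂ} (hz : ‖z‖ = 1) (hw : ‖w‖ = 1) (hne : z ≠ w) : ‖z + w‖ < 2 := by
  set u := z * (starRingEnd ℂ) w with hu
  have hnu : ‖u‖ = 1 := by rw [hu, norm_mul, hz, RCLike.norm_conj, hw]; ring
  have hune : u ≠ 1 := by
    intro h
    apply hne
    have hw2 : (starRingEnd ℂ) w * w = 1 := by
      rw [mul_comm, Complex.mul_conj]
      norm_cast
      rw [← Complex.sq_norm, hw]; norm_num
    calc z = z * ((starRingEnd ℂ) w * w) := by rw [hw2, mul_one]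
      _ = u * w := by rw [hu]; ring
      _ = w := by rw [h, one_mul]
  have hre : u.re < 1 := by
    rcases lt_or_eq_of_le (Complex.re_le_norm u) with h | h
    · calc u.re < ‖u‖ := h
        _ = 1 := by rw [hnu]
    · exfalso
      apply hune
      have habs : ‖u‖ = 1 := by rw [hnu]
      have h1 : u.re = 1 := by rw [h, habs]
      have h2 : u.re ^ 2 + u.im ^ 2 = 1 := by
        have := Complex.sq_norm u
        rw [habs, Complex.normSq_apply] at this
        nlinarith [this]
      have him : u.im = 0 := by nlinarith
      exact Complex.ext h1 (by simpa using him)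
  have hsq : ‖z + w‖ ^ 2 < 2 ^ 2 := by
    have h1 : ‖z + w‖ ^ 2 = Complex.normSq (z + w) := by
      rw [Complex.sq_norm]
    rw [h1, Complex.normSq_add]
    have h2 : Complex.normSq z = 1 := by rw [← Complex.sq_norm, hz]; norm_num
    have h3 : Complex.normSq w = 1 := by rw [← Complex.sq_norm, hw]; norm_num
    rw [h2, h3, ← hu]
    nlinarith [hre]
  exact lt_of_pow_lt_pow_left₀ 2 (by norm_num) hsq

lemma Ur2_lt {M : ℕ} (hM : 2 ≤ M) {A : Finset ℕ} (hA : A ⊆ Finset.range M)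
    (hA2 : 2 ≤ A.card) : Ur (M ^ 2) (Ck M A 2) < (A.card : ℝ) ^ 8 := by
  obtain ⟨a, ha, a', ha', hne⟩ := Finset.one_lt_card.mp (show 1 < A.card by omega)
  have haM : a < M := by simpa using hA ha
  have ha'M : a' < M := by simpa using hA ha'
  set C2 := Ck M A 2 with hC2
  have hcard : C2.card = A.card ^ 2 := card_Ck hA 2
  set j₀ := a + M * a' with hj₀
  set l₀ := a' + M * a' with hl₀
  have hj0m : j₀ ∈ C2 := mem_Ck_two ha ha'
  have hl0m : l₀ ∈ C2 := mem_Ck_two ha' ha'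
  have hj0l0 : j₀ ≠ l₀ := by simp only [hj₀, hl₀]; omega
  set d : ℤ := (j₀ : ℤ) - l₀ with hd
  have hdval : d = (a : ℤ) - a' := by rw [hd, hj₀, hl₀]; push_cast; ring
  have hdne : d ≠ 0 := by
    rw [hdval]
    intro h
    exact hne (by omega)
  have hdsq : ¬ ((M : ℤ) ^ 2 ∣ d * d) := by
    intro hdvd
    have h1 : 0 < d * d := mul_self_pos.mpr hdne
    have hub : d * d < (M:ℤ)^2 := by
      have hb1 : d ≤ (M:ℤ) - 1 := by rw [hdval]; omega
      have hb2 : -((M:ℤ) - 1) ≤ d := by rw [hdval]; omega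
      have hM1 : (1:ℤ) ≤ (M:ℤ) := by exact_mod_cast Nat.one_le_of_lt hM
      nlinarith
    have := Int.le_of_dvd h1 hdvd
    omega
  have hzw : ph (M^2) (d * j₀) ≠ ph (M^2) (d * l₀) := by
    intro h
    have h1 : ph (M^2) (d * j₀ + -(d * l₀)) = 1 := by
      rw [ph_add, h, ← ph_conj, Complex.mul_conj]
      norm_cast
      rw [← Complex.sq_norm, ph_norm]
      norm_num
    have h2 := ph_eq_one (pow_ne_zero 2 (by omega : M ≠ 0)) h1
    apply hdsq
    rw [show d * j₀ + -(d * l₀) = d * d from by rw [hd]; ring] at h2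
    exact_mod_cast h2
  have hnormsub : ∀ S : Finset ℕ, ‖∑ x ∈ S, ph (M^2) (d * x)‖ ≤ (S.card : ℝ) := by
    intro S
    calc ‖∑ x ∈ S, ph (M^2) (d * x)‖ ≤ ∑ x ∈ S, ‖ph (M^2) (d * x)‖ := norm_sum_le _ _
      _ = ∑ _x ∈ S, (1:ℝ) := Finset.sum_congr rfl fun x _ => ph_norm _ _
      _ = (S.card : ℝ) := by simp
  have hcard4 : 4 ≤ C2.card := by
    rw [hcard]
    nlinarith
  have hWlt : ‖Wf (M^2) C2 d‖ < (C2.card : ℝ) := by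
    have hsub : ({j₀, l₀} : Finset ℕ) ⊆ C2 := by
      rw [Finset.insert_subset_iff, Finset.singleton_subset_iff]
      exact ⟨hj0m, hl0m⟩
    have hsplit : Wf (M^2) C2 d = (∑ x ∈ C2 \ {j₀, l₀}, ph (M^2) (d * x))
        + (ph (M^2) (d * j₀) + ph (M^2) (d * l₀)) := by
      rw [Wf, ← Finset.sum_sdiff hsub]
      congr 1
      rw [Finset.sum_pair hj0l0]
    have hcards : ((C2 \ {j₀, l₀}).card : ℝ) = (C2.card : ℝ) - 2 := by
      rw [Finset.card_sdiff_of_subset hsub, Finset.card_pair hj0l0]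
      have : 2 ≤ C2.card := by omega
      push_cast [Nat.cast_sub this]
      ring
    calc ‖Wf (M^2) C2 d‖
        ≤ ‖∑ x ∈ C2 \ {j₀, l₀}, ph (M^2) (d * x)‖
            + ‖ph (M^2) (d * j₀) + ph (M^2) (d * l₀)‖ := hsplit ▸ norm_add_le _ _
      _ < ((C2.card : ℝ) - 2) + 2 := by
          have h1 := hnormsub (C2 \ {j₀, l₀})
          rw [hcards] at h1
          have h2 := norm_add_lt_two (ph_norm (M^2) (d * j₀)) (ph_norm (M^2) (d * l₀)) hzw
          linarith
      _ = (C2.card : ℝ) := by ring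
  have hUrprod : Ur (M^2) C2 = ∑ p ∈ C2 ×ˢ C2, ‖Wf (M^2) C2 ((p.1 : ℤ) - p.2)‖ ^ 2 :=
    (Finset.sum_product' C2 C2 (fun j l => ‖Wf (M^2) C2 ((j : ℤ) - l)‖ ^ 2)).symm
  have hlt : Ur (M^2) C2 < ∑ _p ∈ C2 ×ˢ C2, (C2.card : ℝ) ^ 2 := by
    rw [hUrprod]
    refine Finset.sum_lt_sum (fun p _ => ?_) ⟨(j₀, l₀), Finset.mem_product.2 ⟨hj0m, hl0m⟩, ?_⟩
    · exact pow_le_pow_left₀ (norm_nonneg _) (Wf_norm_le _ _ _) 2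
    · refine pow_lt_pow_left₀ ?_ (norm_nonneg _) (by norm_num)
      simpa [← hd] using hWlt
  have hconst : (∑ _p ∈ C2 ×ˢ C2, (C2.card : ℝ) ^ 2) = (A.card : ℝ) ^ 8 := by
    rw [Finset.sum_const, Finset.card_product, nsmul_eq_mul, hcard]
    push_cast
    ring
  rw [← hconst]
  exact hlt

lemma Ur_pos {N : ℕ} {C : Finset ℕ} (hC : C.Nonempty) : 0 < Ur N C := by
  obtain ⟨j, hj⟩ := hC
  have hcp : 0 < (C.card : ℝ) := by
    have := Finset.card_pos.2 ⟨j, hj⟩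
    exact_mod_cast this
  have hW0 : Wf N C ((j : ℤ) - j) = (C.card : ℂ) := by
    rw [show (j:ℤ) - j = 0 from by ring, Wf]
    have h1 : ∀ x ∈ C, ph N ((0:ℤ) * x) = 1 := by
      intro x _
      rw [zero_mul, ph]
      simp
    rw [Finset.sum_congr rfl h1]
    simp
  have hterm : (0:ℝ) < ‖Wf N C ((j : ℤ) - j)‖ ^ 2 := by
    rw [hW0]
    have : ‖((C.card : ℕ) : ℂ)‖ = (C.card : ℝ) := by
      rw [Complex.norm_natCast]
    rw [this]
    positivity
  have hinner : ‖Wf N C ((j : ℤ) - j)‖ ^ 2 ≤ ∑ l ∈ C, ‖Wf N C ((j : ℤ) - l)‖ ^ 2 :=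
    Finset.single_le_sum (f := fun l : ℕ => ‖Wf N C ((j : ℤ) - (l : ℤ))‖ ^ 2)
      (fun l _ => by positivity) hj
  have houter : (∑ l ∈ C, ‖Wf N C ((j : ℤ) - l)‖ ^ 2) ≤ Ur N C := by
    rw [Ur]
    exact Finset.single_le_sum (f := fun i : ℕ => ∑ l ∈ C, ‖Wf N C ((i : ℤ) - (l : ℤ))‖ ^ 2)
      (fun i _ => Finset.sum_nonneg fun l _ => by positivity) hj
  linarith

/-- If `2 ≤ |A| ≤ M-1` (so `δ = log|A|/log M ∈ (0,1)`), there exists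
`β > 1/2 - δ` such that for every `ε > 0` there is `C_ε > 0` with
`t_k ≤ C_ε (M^k)^{-4β+ε}` for all `k ≥ 1`. -/
theorem stmt5 (M : ℕ) (hM : 2 ≤ M) (A : Finset ℕ) (hA : A ⊆ Finset.range M)
    (hA2 : 2 ≤ A.card) (hAM : A.card ≤ M - 1) :
    ∃ β : ℝ, 1 / 2 - Real.log A.card / Real.log M < β ∧
      ∀ ε : ℝ, 0 < ε → ∃ Cε : ℝ, 0 < Cε ∧ ∀ k : ℕ, 1 ≤ k →
        tk M A k ≤ Cε * ((M ^ k : ℕ) : ℝ) ^ (-4 * β + ε) := by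
  have hM1 : (1:ℝ) < (M:ℝ) := by exact_mod_cast hM
  have hlogM : 0 < Real.log M := Real.log_pos hM1
  obtain ⟨a0, ha0⟩ : A.Nonempty := Finset.card_pos.mp (by omega)
  set q := Ur (M ^ 2) (Ck M A 2) with hqdef
  have hq0 : 0 < q := Ur_pos ⟨a0 + M * a0, mem_Ck_two ha0 ha0⟩
  have hqlt : q < (A.card : ℝ) ^ 8 := Ur2_lt hM hA hA2
  have hsq0 : 0 < Real.sqrt q := Real.sqrt_pos.2 hq0
  have hsqq : Real.sqrt q * Real.sqrt q = q := Real.mul_self_sqrt hq0.le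
  have hsqle : Real.sqrt q ≤ (A.card : ℝ) ^ 4 := by
    have h1 : Real.sqrt q ≤ Real.sqrt ((A.card : ℝ) ^ 8) := Real.sqrt_le_sqrt hqlt.le
    rwa [show ((A.card : ℝ) ^ 8) = ((A.card : ℝ) ^ 4) ^ 2 from by ring,
      Real.sqrt_sq (by positivity)] at h1
  have main : ∀ n : ℕ, Ur (M ^ (n + 1)) (Ck M A (n + 1))
      ≤ (A.card : ℝ) ^ 4 * (Real.sqrt q) ^ n := by
    have h0 : Ur (M ^ (0 + 1)) (Ck M A (0 + 1)) ≤ (A.card : ℝ) ^ 4 * (Real.sqrt q) ^ 0 := by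
      have h1 := Ur_le (M ^ 1) (Ck M A 1)
      rw [card_Ck hA 1, pow_one] at h1
      simpa using h1
    have h1 : Ur (M ^ (1 + 1)) (Ck M A (1 + 1)) ≤ (A.card : ℝ) ^ 4 * (Real.sqrt q) ^ 1 := by
      have h2 : Ur (M ^ (1 + 1)) (Ck M A (1 + 1)) = q := rfl
      rw [h2, pow_one]
      calc q = Real.sqrt q * Real.sqrt q := hsqq.symm
        _ ≤ (A.card : ℝ) ^ 4 * Real.sqrt q := mul_le_mul_of_nonneg_right hsqle hsq0.le
    intro n
    induction n using Nat.twoStepInduction with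
    | zero => exact h0
    | one => exact h1
    | more n ihn _ =>
      have h := Ur_submul hM hA 2 (n + 1)
      rw [show 2 + (n + 1) = n + 2 + 1 from by omega] at h
      calc Ur (M ^ (n + 2 + 1)) (Ck M A (n + 2 + 1))
          ≤ q * Ur (M ^ (n + 1)) (Ck M A (n + 1)) := h
        _ ≤ q * ((A.card : ℝ) ^ 4 * (Real.sqrt q) ^ n) :=
            mul_le_mul_of_nonneg_left ihn hq0.le
        _ = (A.card : ℝ) ^ 4 * (Real.sqrt q) ^ (n + 2) := by
            rw [pow_succ, pow_succ]
            linear_combination (-((A.card : ℝ) ^ 4 * Real.sqrt q ^ n)) * hsqq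
  refine ⟨1 / 2 - Real.log q / (8 * Real.log M), ?_, ?_⟩
  · have hlq : Real.log q < Real.log ((A.card : ℝ) ^ 8) := Real.log_lt_log hq0 hqlt
    rw [Real.log_pow] at hlq
    have hdiv : Real.log q / (8 * Real.log M)
        < (((8:ℕ):ℝ) * Real.log (A.card : ℝ)) / (8 * Real.log M) := by gcongr
    have heq : (((8:ℕ):ℝ) * Real.log (A.card : ℝ)) / (8 * Real.log M)
        = Real.log (A.card : ℝ) / Real.log M := by
      have hne : Real.log M ≠ 0 := ne_of_gt hlogM
      push_cast
      field_simp
    rw [heq] at hdiv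
    linarith
  · intro ε hε
    refine ⟨(A.card : ℝ) ^ 4 / Real.sqrt q, by positivity, ?_⟩
    intro k hk
    obtain ⟨n, rfl⟩ : ∃ n, k = n + 1 := ⟨k - 1, by omega⟩
    have htk := tk_eq hM hA (n + 1)
    have hUr := main n
    have hpow : (0:ℝ) < ((M : ℝ) ^ (n + 1)) ^ 2 := by positivity
    have hbase : (0:ℝ) < ((M ^ (n + 1) : ℕ) : ℝ) := by positivity
    have hcastpow : ((M ^ (n + 1) : ℕ) : ℝ) = (M : ℝ) ^ (n + 1) := by push_cast; ring
    have hval : ((M ^ (n + 1) : ℕ) : ℝ) ^ (-4 * (1 / 2 - Real.log q / (8 * Real.log M)))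
        = (Real.sqrt q) ^ (n + 1) / ((M : ℝ) ^ (n + 1)) ^ 2 := by
      rw [Real.rpow_def_of_pos hbase, hcastpow, Real.log_pow]
      have harg : ((n + 1 : ℕ) : ℝ) * Real.log M
            * (-4 * (1 / 2 - Real.log q / (8 * Real.log M)))
          = ((n + 1 : ℕ) : ℝ) * Real.log (Real.sqrt q)
            + -(Real.log (((M : ℝ) ^ (n + 1)) ^ 2)) := by
        rw [Real.log_sqrt hq0.le, Real.log_pow, Real.log_pow]
        have hne : Real.log M ≠ 0 := ne_of_gt hlogM
        field_simp
        ring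
      rw [harg, Real.exp_add, Real.exp_nat_mul, Real.exp_log hsq0, Real.exp_neg,
        Real.exp_log hpow, div_eq_mul_inv]
    have hone : (1:ℝ) ≤ ((M ^ (n + 1) : ℕ) : ℝ) := by
      have : 1 ≤ M ^ (n + 1) := Nat.one_le_pow _ _ (by omega)
      exact_mod_cast this
    have hexp : ((M ^ (n + 1) : ℕ) : ℝ) ^ (-4 * (1 / 2 - Real.log q / (8 * Real.log M)))
        ≤ ((M ^ (n + 1) : ℕ) : ℝ) ^ (-4 * (1 / 2 - Real.log q / (8 * Real.log M)) + ε) :=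
      Real.rpow_le_rpow_of_exponent_le hone (by linarith)
    calc tk M A (n + 1) = Ur (M ^ (n + 1)) (Ck M A (n + 1)) / ((M : ℝ) ^ (n + 1)) ^ 2 := htk
      _ ≤ ((A.card : ℝ) ^ 4 * (Real.sqrt q) ^ n) / ((M : ℝ) ^ (n + 1)) ^ 2 := by gcongr
      _ = ((A.card : ℝ) ^ 4 / Real.sqrt q)
            * ((Real.sqrt q) ^ (n + 1) / ((M : ℝ) ^ (n + 1)) ^ 2) := by
          rw [pow_succ]
          field_simp
          ring
      _ = ((A.card : ℝ) ^ 4 / Real.sqrt q)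
            * ((M ^ (n + 1) : ℕ) : ℝ) ^ (-4 * (1 / 2 - Real.log q / (8 * Real.log M))) := by
          rw [hval]
      _ ≤ ((A.card : ℝ) ^ 4 / Real.sqrt q)
            * ((M ^ (n + 1) : ℕ) : ℝ) ^ (-4 * (1 / 2 - Real.log q / (8 * Real.log M)) + ε) :=
          mul_le_mul_of_nonneg_left hexp (by positivity)
end
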